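/- arXiv:0903.5457 — 3 statements merged into one kernel-verified Lean document; each statement's English description precedes it below -/
import Mathlib

section
/- Let H0 be a self-adjoint operator with H0 ≥ 1, D = D^∞(H0), and Q^0_L = E([1,L]) its spectral projections. Then the regularized Hamiltonians H_L := Q^0_L H0 Q^0_L converge to H0 with respect to the quasi-uniform topology τ_*^D on L†(D); that is, for every f ∈ F and every k ∈ ℕ∪{0}, both ‖H0^k (H_L − H0) f(H0)‖ → 0 and ‖f(H0)(H_L − H0) H0^k‖ → 0 as L → ∞. -/
open scoped ComplexInnerProductSpace

namespace Paper

/-- An unbounded linear operator in a Hilbert space `𝓗`, encoded by a distinguished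
domain together with a globally defined linear extension of its action. -/
structure Op (𝓗 : Type*) [NormedAddCommGroup 𝓗] [InnerProductSpace ℂ 𝓗] where
  dom : Submodule ℂ 𝓗
  op : 𝓗 →ₗ[ℂ] 𝓗

variable {𝓗 : Type*} [NormedAddCommGroup 𝓗] [InnerProductSpace ℂ 𝓗]

namespace Op

/-- `T.pw k` is the `k`-th power `T^k` of `T`, as a function. -/
def pw (T : Op 𝓗) (k : ℕ) : 𝓗 → 𝓗 := (fun x => T.op x)^[k]

/-- The domain `D(Tⁿ)` of the `n`-th power of `T`. -/
def domPow (T : Op 𝓗) : ℕ → Set 𝓗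
  | 0 => Set.univ
  | n + 1 => {x | x ∈ T.dom ∧ T.op x ∈ T.domPow n}

/-- The set of C^∞-vectors `D^∞(T) = ⋂ₙ D(Tⁿ)`. -/
def Dinf (T : Op 𝓗) : Set 𝓗 := ⋂ n : ℕ, T.domPow n

/-- `T` is symmetric. -/
def Symmetric (T : Op 𝓗) : Prop :=
  ∀ x ∈ T.dom, ∀ y ∈ T.dom, ⟪T.op x, y⟫ = ⟪x, T.op y⟫

/-- Self-adjointness: densely defined, symmetric, and every vector in the domain of the
adjoint already belongs to the domain (on which the adjoint acts as the operator). -/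
def IsSelfAdjoint (T : Op 𝓗) : Prop :=
  Dense (T.dom : Set 𝓗) ∧ T.Symmetric ∧
    ∀ y z : 𝓗, (∀ x ∈ T.dom, ⟪T.op x, y⟫ = ⟪x, z⟫) → y ∈ T.dom ∧ T.op y = z

/-- `T ≥ 1`. -/
def GeOne (T : Op 𝓗) : Prop := ∀ x ∈ T.dom, ‖x‖ ^ 2 ≤ (⟪T.op x, x⟫).re

/-- The perturbed operator `T + B`, with domain `D(T)`. -/
def pert (T B : Op 𝓗) : Op 𝓗 := ⟨T.dom, T.op + B.op⟩

/-- The graph topology `t_T` on a subset `D`, generated by the seminorms `φ ↦ ‖Tⁿφ‖`,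
i.e. the initial topology for the maps `φ ↦ Tⁿφ`. -/
def graphTopOn (T : Op 𝓗) (D : Set 𝓗) : TopologicalSpace D :=
  ⨅ n : ℕ, TopologicalSpace.induced (fun φ : D => T.pw n ↑φ) inferInstance

end Op

/-- `D0` is a core for the `k`-th power of `T`. -/
def IsCorePow (T : Op 𝓗) (k : ℕ) (D0 : Set 𝓗) : Prop :=
  D0 ⊆ T.domPow k ∧ ∀ x ∈ T.domPow k, ∃ u : ℕ → 𝓗, (∀ n, u n ∈ D0) ∧
    Filter.Tendsto u Filter.atTop (nhds x) ∧
    Filter.Tendsto (fun n => T.pw k (u n)) Filter.atTop (nhds (T.pw k x))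

/-- Membership in the O*-algebra `L†(D)`: `A` maps `D` into `D`, `D ⊆ D(A*)` and
`A* D ⊆ D` (witnessed by `Adag`). -/
def MemLdag (D : Set 𝓗) (A : 𝓗 →ₗ[ℂ] 𝓗) : Prop :=
  (∀ x ∈ D, A x ∈ D) ∧
    ∃ Adag : 𝓗 →ₗ[ℂ] 𝓗, (∀ x ∈ D, Adag x ∈ D) ∧
      ∀ x ∈ D, ∀ y ∈ D, ⟪A x, y⟫ = ⟪x, Adag y⟫

/-- The operator norm of (the bounded extension of) `A`, computed on the unit ball of `D`. -/
noncomputable def opNormOn (D : Set 𝓗) (A : 𝓗 → 𝓗) : ℝ :=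
  ⨆ φ : {ψ : 𝓗 // ψ ∈ D ∧ ‖ψ‖ ≤ 1}, ‖A ↑φ‖

/-- The class `F` of positive, bounded, continuous functions on `[0,∞)` which decrease
faster than any inverse power of `x`. -/
def IsInF (f : ℝ → ℝ) : Prop :=
  Continuous f ∧ (∀ x : ℝ, 0 ≤ x → 0 < f x) ∧
    ∀ k : ℕ, ∃ M : ℝ, ∀ x : ℝ, 0 ≤ x → x ^ k * f x ≤ M

/-- The bounded measurable functional calculus of a self-adjoint operator `T` whose
spectrum is contained in `[a, ∞)`. -/
structure FnCalc (T : Op 𝓗) (a : ℝ) where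
  Φ : (ℝ → ℝ) → (𝓗 →L[ℂ] 𝓗)
  Φ_one : Φ (fun _ => 1) = 1
  Φ_add : ∀ f g : ℝ → ℝ, Measurable f → Measurable g →
    Φ (fun t => f t + g t) = Φ f + Φ g
  Φ_mul : ∀ f g : ℝ → ℝ, Measurable f → Measurable g →
    Φ (fun t => f t * g t) = (Φ f).comp (Φ g)
  Φ_symm : ∀ (f : ℝ → ℝ) (x y : 𝓗), ⟪Φ f x, y⟫ = ⟪x, Φ f y⟫
  Φ_norm : ∀ (f : ℝ → ℝ) (M : ℝ), (∀ t : ℝ, a ≤ t → |f t| ≤ M) →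
    ∀ x : 𝓗, ‖Φ f x‖ ≤ M * ‖x‖
  Φ_supp : ∀ f : ℝ → ℝ, Measurable f → (∀ t : ℝ, a ≤ t → f t = 0) → Φ f = 0
  Φ_pos : ∀ f : ℝ → ℝ, Measurable f → (∀ t : ℝ, a ≤ t → 0 ≤ f t) →
    ∀ x : 𝓗, 0 ≤ (⟪Φ f x, x⟫).re
  Φ_dom : ∀ f : ℝ → ℝ, Measurable f → (∃ M : ℝ, ∀ t : ℝ, a ≤ t → |t * f t| ≤ M) →
    ∀ x : 𝓗, Φ f x ∈ T.dom ∧ T.op (Φ f x) = Φ (fun t => t * f t) x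
  Q_tendsto : ∀ x : 𝓗, Filter.Tendsto
    (fun L : ℝ => Φ (Set.indicator (Set.Icc a L) fun _ => (1 : ℝ)) x)
    Filter.atTop (nhds x)

/-- The spectral projection `Q_L = E([a, L])` of `T`. -/
noncomputable def FnCalc.Q {T : Op 𝓗} {a : ℝ} (c : FnCalc T a) (L : ℝ) : 𝓗 →L[ℂ] 𝓗 :=
  c.Φ (Set.indicator (Set.Icc a L) fun _ => (1 : ℝ))

/-- The seminorm `A ↦ max{‖Tᵏ A f(T)‖, ‖f(T) A Tᵏ‖}` of the quasi-uniform topology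
`τ_*` on `L†(D)`. -/
noncomputable def qseminorm {T : Op 𝓗} {a : ℝ} (c : FnCalc T a) (D : Set 𝓗)
    (f : ℝ → ℝ) (k : ℕ) (A : 𝓗 →ₗ[ℂ] 𝓗) : ℝ :=
  max (opNormOn D fun φ => T.pw k (A (c.Φ f φ)))
      (opNormOn D fun φ => c.Φ f (A (T.pw k φ)))

/-- `i[A,T] = i(A T - T A)`, as a function. -/
noncomputable def commI (A T : 𝓗 → 𝓗) : 𝓗 → 𝓗 :=
  fun φ => Complex.I • (A (T φ) - T (A φ))

/-- Iterated commutators: `itComm A B j = [A, B]_j`, with `[A,B]_0 = B` and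
`[A,B]_{j+1} = [A, [A,B]_j]`. -/
def itComm (A B : 𝓗 → 𝓗) : ℕ → (𝓗 → 𝓗)
  | 0 => B
  | j + 1 => fun φ => A (itComm A B j φ) - itComm A B j (A φ)

variable {𝓗 : Type*} [NormedAddCommGroup 𝓗] [InnerProductSpace ℂ 𝓗] [CompleteSpace 𝓗]

section Aux

variable {H0 : Op 𝓗}

lemma Phi_sub (S0 : FnCalc H0 1) (f g : ℝ → ℝ) (hf : Measurable f) (hg : Measurable g) :
    S0.Φ (fun t => f t - g t) = S0.Φ f - S0.Φ g := by
  have h := S0.Φ_add (fun t => f t - g t) g (hf.sub hg) hg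
  have h2 : (fun t => (f t - g t) + g t) = f := by funext t; ring
  rw [h2] at h
  rw [h]; abel

lemma Phi_comm (hsa : H0.IsSelfAdjoint) (S0 : FnCalc H0 1) (g : ℝ → ℝ) (hg : Measurable g)
    (hb : ∃ M : ℝ, ∀ t : ℝ, 1 ≤ t → |t * g t| ≤ M) {x : 𝓗} (hx : x ∈ H0.dom) :
    S0.Φ g (H0.op x) = S0.Φ (fun t => t * g t) x := by
  refine ext_inner_left ℂ fun u => ?_
  have hd := S0.Φ_dom g hg hb u
  calc ⟪u, S0.Φ g (H0.op x)⟫ = ⟪S0.Φ g u, H0.op x⟫ := (S0.Φ_symm g u (H0.op x)).symm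
    _ = ⟪H0.op (S0.Φ g u), x⟫ := (hsa.2.1 _ hd.1 x hx).symm
    _ = ⟪S0.Φ (fun t => t * g t) u, x⟫ := by rw [hd.2]
    _ = ⟪u, S0.Φ (fun t => t * g t) x⟫ := S0.Φ_symm _ u x

lemma dinf_mem_dom {φ : 𝓗} (h : φ ∈ H0.Dinf) : φ ∈ H0.dom :=
  (Set.mem_iInter.1 h 1).1

lemma dinf_op {φ : 𝓗} (h : φ ∈ H0.Dinf) : H0.op φ ∈ H0.Dinf :=
  Set.mem_iInter.2 fun n => (Set.mem_iInter.1 h (n + 1)).2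

lemma dinf_pw {φ : 𝓗} (h : φ ∈ H0.Dinf) (k : ℕ) : H0.pw k φ ∈ H0.Dinf := by
  induction k with
  | zero => exact h
  | succ k ih =>
    rw [Op.pw, Function.iterate_succ_apply']
    exact dinf_op ih

lemma pw_succ (k : ℕ) (φ : 𝓗) : H0.pw (k + 1) φ = H0.op (H0.pw k φ) := by
  rw [Op.pw, Function.iterate_succ_apply']; rfl

lemma pw_Phi (S0 : FnCalc H0 1) (φ : 𝓗) (k : ℕ) :
    ∀ g : ℝ → ℝ, Measurable g →
      (∀ j : ℕ, ∃ M : ℝ, ∀ t : ℝ, 1 ≤ t → |t ^ j * g t| ≤ M) →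
      H0.pw k (S0.Φ g φ) = S0.Φ (fun t => t ^ k * g t) φ := by
  induction k with
  | zero =>
    intro g hg _
    have h : (fun t : ℝ => t ^ 0 * g t) = g := by funext t; ring
    rw [h]; rfl
  | succ k ih =>
    intro g hg hb
    have hgk : Measurable fun t : ℝ => t ^ k * g t := (measurable_id.pow_const k).mul hg
    have hbk : ∃ M : ℝ, ∀ t : ℝ, 1 ≤ t → |t * (t ^ k * g t)| ≤ M := by
      obtain ⟨M, hM⟩ := hb (k + 1)
      refine ⟨M, fun t ht => ?_⟩
      have h : t * (t ^ k * g t) = t ^ (k + 1) * g t := by ring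
      rw [h]; exact hM t ht
    rw [pw_succ, ih g hg hb, (S0.Φ_dom _ hgk hbk φ).2]
    have h : (fun t : ℝ => t * (t ^ k * g t)) = fun t => t ^ (k + 1) * g t := by
      funext t; ring
    rw [h]

lemma Phi_pw (hsa : H0.IsSelfAdjoint) (S0 : FnCalc H0 1) {φ : 𝓗} (hφ : φ ∈ H0.Dinf)
    (k : ℕ) :
    ∀ g : ℝ → ℝ, Measurable g →
      (∀ j : ℕ, ∃ M : ℝ, ∀ t : ℝ, 1 ≤ t → |t ^ j * g t| ≤ M) →
      S0.Φ g (H0.pw k φ) = S0.Φ (fun t => t ^ k * g t) φ := by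
  induction k with
  | zero =>
    intro g hg _
    have h : (fun t : ℝ => t ^ 0 * g t) = g := by funext t; ring
    rw [h]; rfl
  | succ k ih =>
    intro g hg hb
    have hb1 : ∃ M : ℝ, ∀ t : ℝ, 1 ≤ t → |t * g t| ≤ M := by
      obtain ⟨M, hM⟩ := hb 1
      exact ⟨M, fun t ht => by simpa using hM t ht⟩
    rw [pw_succ, Phi_comm hsa S0 g hg hb1 (dinf_mem_dom (dinf_pw hφ k)),
      ih (fun t => t * g t) (measurable_id.mul hg) ?_]
    · have h : (fun t : ℝ => t ^ k * (t * g t)) = fun t => t ^ (k + 1) * g t := by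
        funext t; ring
      rw [h]
    · intro j
      obtain ⟨M, hM⟩ := hb (j + 1)
      refine ⟨M, fun t ht => ?_⟩
      have h : t ^ j * (t * g t) = t ^ (j + 1) * g t := by ring
      rw [h]; exact hM t ht

lemma inner_bound {f : ℝ → ℝ} (hf : IsInF f) (h : ℝ → ℝ)
    (hh : ∀ t : ℝ, 1 ≤ t → |h t| ≤ t * f t) (j : ℕ) :
    ∃ M : ℝ, ∀ t : ℝ, 1 ≤ t → |t ^ j * h t| ≤ M := by
  obtain ⟨M, hM⟩ := hf.2.2 (j + 1)
  refine ⟨M, fun t ht => ?_⟩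
  have h0 : (0 : ℝ) ≤ t := le_trans zero_le_one ht
  calc |t ^ j * h t| = t ^ j * |h t| := by
        rw [abs_mul, abs_of_nonneg (pow_nonneg h0 j)]
    _ ≤ t ^ j * (t * f t) := mul_le_mul_of_nonneg_left (hh t ht) (pow_nonneg h0 j)
    _ = t ^ (j + 1) * f t := by ring
    _ ≤ M := hM t h0

lemma final_bound {f : ℝ → ℝ} (hf : IsInF f) (k : ℕ) (M : ℝ)
    (hM : ∀ x : ℝ, 0 ≤ x → x ^ (k + 2) * f x ≤ M) (L : ℝ) (hL : 1 ≤ L)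
    (g : ℝ → ℝ) (hg0 : ∀ t : ℝ, 1 ≤ t → t ≤ L → g t = 0)
    (hg1 : ∀ t : ℝ, 1 ≤ t → |g t| ≤ t ^ (k + 1) * f t) :
    ∀ t : ℝ, 1 ≤ t → |g t| ≤ M / L := by
  have hM0 : 0 < M := lt_of_lt_of_le (hf.2.1 1 zero_le_one) (by simpa using hM 1 zero_le_one)
  intro t ht
  by_cases hc : t ≤ L
  · rw [hg0 t ht hc]
    simp only [abs_zero]
    positivity
  · push_neg at hc
    have ht0 : (0 : ℝ) < t := lt_of_lt_of_le one_pos ht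
    calc |g t| ≤ t ^ (k + 1) * f t := hg1 t ht
      _ ≤ M / t := by
          have hp : t ^ (k + 1) * f t * t = t ^ (k + 2) * f t := by ring
          rw [le_div_iff₀ ht0, hp]
          exact hM t (le_of_lt ht0)
      _ ≤ M / L := by
          apply div_le_div_of_nonneg_left (le_of_lt hM0) (lt_of_lt_of_le one_pos hL)
          exact le_of_lt hc

end Aux

/-- For a self-adjoint `H0 ≥ 1` with `D = D^∞(H0)`, the regularized
Hamiltonians `H_L = Q⁰_L H0 Q⁰_L` converge to `H0` in the quasi-uniform topology `τ_*`:
for every `f ∈ F` and `k ∈ ℕ ∪ {0}`, both `‖H0^k (H_L - H0) f(H0)‖ → 0` and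
`‖f(H0) (H_L - H0) H0^k‖ → 0` as `L → ∞`. -/
theorem stmt1 (H0 : Op 𝓗) (hsa : H0.IsSelfAdjoint) (hge : H0.GeOne)
    (S0 : FnCalc H0 1) (D : Set 𝓗) (hD : D = H0.Dinf) :
    ∀ f : ℝ → ℝ, IsInF f → ∀ k : ℕ,
      Filter.Tendsto (fun L : ℝ => opNormOn D (fun φ =>
          H0.pw k (S0.Q L (H0.op (S0.Q L (S0.Φ f φ))) - H0.op (S0.Φ f φ))))
        Filter.atTop (nhds 0) ∧
      Filter.Tendsto (fun L : ℝ => opNormOn D (fun φ =>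
          S0.Φ f (S0.Q L (H0.op (S0.Q L (H0.pw k φ))) - H0.op (H0.pw k φ))))
        Filter.atTop (nhds 0) := by
  intro f hf k
  have hfm : Measurable f := hf.1.measurable
  have hfnn : ∀ t : ℝ, 1 ≤ t → 0 ≤ f t := fun t ht =>
    le_of_lt (hf.2.1 t (le_trans zero_le_one ht))
  obtain ⟨M, hM⟩ := hf.2.2 (k + 2)
  have hM0 : 0 < M := lt_of_lt_of_le (hf.2.1 1 zero_le_one) (by simpa using hM 1 zero_le_one)
  obtain ⟨M1, hM1⟩ := hf.2.2 1
  have hb1 : ∃ M' : ℝ, ∀ t : ℝ, 1 ≤ t → |t * f t| ≤ M' := by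
    refine ⟨M1, fun t ht => ?_⟩
    have h0 : (0 : ℝ) ≤ t := le_trans zero_le_one ht
    rw [abs_of_nonneg (mul_nonneg h0 (hfnn t ht))]
    simpa using hM1 t h0
  have hdiv : Filter.Tendsto (fun L : ℝ => M / L) Filter.atTop (nhds 0) :=
    Filter.Tendsto.div_atTop tendsto_const_nhds Filter.tendsto_id
  constructor
  · refine squeeze_zero' (Filter.Eventually.of_forall fun L => ?_) ?_ hdiv
    · exact Real.iSup_nonneg fun φ => norm_nonneg _
    · filter_upwards [Filter.eventually_ge_atTop (1 : ℝ)] with L hL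
      set χ : ℝ → ℝ := Set.indicator (Set.Icc (1 : ℝ) L) (fun _ => 1) with hχdef
      have hχm : Measurable χ := measurable_const.indicator measurableSet_Icc
      have hχ1 : ∀ t : ℝ, 1 ≤ t → t ≤ L → χ t = 1 := fun t h1 h2 =>
        Set.indicator_of_mem (Set.mem_Icc.mpr ⟨h1, h2⟩) _
      have hχ0 : ∀ t : ℝ, L < t → χ t = 0 := fun t h =>
        Set.indicator_of_notMem (fun hm => absurd (Set.mem_Icc.mp hm).2 (not_le.2 h)) _
      have hχ01 : ∀ t : ℝ, 1 ≤ t → 0 ≤ χ t ∧ χ t ≤ 1 := by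
        intro t ht
        by_cases hc : t ≤ L
        · rw [hχ1 t ht hc]; norm_num
        · rw [hχ0 t (not_le.1 hc)]; norm_num
      set g : ℝ → ℝ := fun t => χ t * (t * (χ t * f t)) - t * f t with hgdef
      have hgb : ∀ t : ℝ, 1 ≤ t → |g t| ≤ t * f t := by
        intro t ht
        show |g t| ≤ t * f t
        simp only [hgdef]
        obtain ⟨hx0, hx1⟩ := hχ01 t ht
        have hf0 := hfnn t ht
        have ht0 : (0 : ℝ) ≤ t := le_trans zero_le_one ht
        have htf : 0 ≤ t * f t := mul_nonneg ht0 hf0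
        have hsq : χ t * χ t ≤ 1 := mul_le_one₀ hx1 hx0 hx1
        rw [abs_le]
        constructor <;> nlinarith [mul_nonneg (mul_nonneg hx0 hx0) htf,
          mul_le_mul_of_nonneg_right hsq htf]
      have hgm : Measurable g :=
        (hχm.mul (measurable_id.mul (hχm.mul hfm))).sub (measurable_id.mul hfm)
      have hχf : Measurable fun t => χ t * f t := hχm.mul hfm
      have hbχf : ∃ M' : ℝ, ∀ t : ℝ, 1 ≤ t → |t * (χ t * f t)| ≤ M' := by
        obtain ⟨M', hM'⟩ := hb1
        refine ⟨M', fun t ht => ?_⟩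
        obtain ⟨hx0, hx1⟩ := hχ01 t ht
        have h0 : (0 : ℝ) ≤ t := le_trans zero_le_one ht
        have h1 := hM' t ht
        rw [abs_of_nonneg (mul_nonneg h0 (hfnn t ht))] at h1
        rw [abs_of_nonneg (mul_nonneg h0 (mul_nonneg hx0 (hfnn t ht)))]
        nlinarith [mul_nonneg h0 (hfnn t ht)]
      have key : ∀ φ : 𝓗,
          H0.pw k (S0.Q L (H0.op (S0.Q L (S0.Φ f φ))) - H0.op (S0.Φ f φ)) =
            S0.Φ (fun t => t ^ k * g t) φ := by
        intro φ
        have e1 : S0.Q L (S0.Φ f φ) = S0.Φ (fun t => χ t * f t) φ := by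
          show S0.Φ χ (S0.Φ f φ) = _
          rw [S0.Φ_mul χ f hχm hfm]; rfl
        have e2 : H0.op (S0.Φ (fun t => χ t * f t) φ) =
            S0.Φ (fun t => t * (χ t * f t)) φ := (S0.Φ_dom _ hχf hbχf φ).2
        have e3 : S0.Q L (S0.Φ (fun t => t * (χ t * f t)) φ) =
            S0.Φ (fun t => χ t * (t * (χ t * f t))) φ := by
          show S0.Φ χ _ = _
          rw [S0.Φ_mul χ (fun t => t * (χ t * f t)) hχm (measurable_id.mul hχf)]; rfl
        have e4 : H0.op (S0.Φ f φ) = S0.Φ (fun t => t * f t) φ :=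
          (S0.Φ_dom f hfm hb1 φ).2
        rw [e1, e2, e3, e4]
        have e5 : S0.Φ (fun t => χ t * (t * (χ t * f t))) φ - S0.Φ (fun t => t * f t) φ =
            S0.Φ g φ := by
          rw [show S0.Φ g = S0.Φ (fun t => χ t * (t * (χ t * f t))) - S0.Φ (fun t => t * f t)
            from Phi_sub S0 _ _ (hχm.mul (measurable_id.mul hχf)) (measurable_id.mul hfm)]
          rfl
        rw [e5]
        exact pw_Phi S0 φ k g hgm (inner_bound hf g hgb)
      have hfinal : ∀ t : ℝ, 1 ≤ t → |t ^ k * g t| ≤ M / L := by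
        refine final_bound hf k M hM L hL _ ?_ ?_
        · intro t h1 h2
          show t ^ k * (χ t * (t * (χ t * f t)) - t * f t) = 0
          rw [hχ1 t h1 h2]; ring
        · intro t ht
          have h0 : (0 : ℝ) ≤ t := le_trans zero_le_one ht
          rw [abs_mul, abs_of_nonneg (pow_nonneg h0 k)]
          calc t ^ k * |g t| ≤ t ^ k * (t * f t) :=
                mul_le_mul_of_nonneg_left (hgb t ht) (pow_nonneg h0 k)
            _ = t ^ (k + 1) * f t := by ring
      have hML : 0 ≤ M / L := le_of_lt (div_pos hM0 (lt_of_lt_of_le one_pos hL))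
      refine Real.iSup_le (fun i => ?_) hML
      obtain ⟨φ, hφD, hφn⟩ := i
      calc ‖H0.pw k (S0.Q L (H0.op (S0.Q L (S0.Φ f φ))) - H0.op (S0.Φ f φ))‖ =
            ‖S0.Φ (fun t => t ^ k * g t) φ‖ := by rw [key φ]
        _ ≤ (M / L) * ‖φ‖ := S0.Φ_norm _ (M / L) hfinal φ
        _ ≤ (M / L) * 1 := mul_le_mul_of_nonneg_left hφn hML
        _ = M / L := mul_one _
  · refine squeeze_zero' (Filter.Eventually.of_forall fun L => ?_) ?_ hdiv
    · exact Real.iSup_nonneg fun φ => norm_nonneg _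
    · filter_upwards [Filter.eventually_ge_atTop (1 : ℝ)] with L hL
      set χ : ℝ → ℝ := Set.indicator (Set.Icc (1 : ℝ) L) (fun _ => 1) with hχdef
      have hχm : Measurable χ := measurable_const.indicator measurableSet_Icc
      have hχ1 : ∀ t : ℝ, 1 ≤ t → t ≤ L → χ t = 1 := fun t h1 h2 =>
        Set.indicator_of_mem (Set.mem_Icc.mpr ⟨h1, h2⟩) _
      have hχ0 : ∀ t : ℝ, L < t → χ t = 0 := fun t h =>
        Set.indicator_of_notMem (fun hm => absurd (Set.mem_Icc.mp hm).2 (not_le.2 h)) _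
      have hχ01 : ∀ t : ℝ, 1 ≤ t → 0 ≤ χ t ∧ χ t ≤ 1 := by
        intro t ht
        by_cases hc : t ≤ L
        · rw [hχ1 t ht hc]; norm_num
        · rw [hχ0 t (not_le.1 hc)]; norm_num
      set g : ℝ → ℝ := fun t => f t * (χ t * (t * χ t)) - t * f t with hgdef
      have hgb : ∀ t : ℝ, 1 ≤ t → |g t| ≤ t * f t := by
        intro t ht
        show |g t| ≤ t * f t
        simp only [hgdef]
        obtain ⟨hx0, hx1⟩ := hχ01 t ht
        have hf0 := hfnn t ht
        have ht0 : (0 : ℝ) ≤ t := le_trans zero_le_one ht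
        have htf : 0 ≤ t * f t := mul_nonneg ht0 hf0
        have hsq : χ t * χ t ≤ 1 := mul_le_one₀ hx1 hx0 hx1
        rw [abs_le]
        constructor <;> nlinarith [mul_nonneg (mul_nonneg hx0 hx0) htf,
          mul_le_mul_of_nonneg_right hsq htf]
      have hgm : Measurable g :=
        (hfm.mul (hχm.mul (measurable_id.mul hχm))).sub (measurable_id.mul hfm)
      have hbχ : ∃ M' : ℝ, ∀ t : ℝ, 1 ≤ t → |t * χ t| ≤ M' := by
        refine ⟨L, fun t ht => ?_⟩
        by_cases hc : t ≤ L
        · rw [hχ1 t ht hc, mul_one, abs_of_nonneg (le_trans zero_le_one ht)]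
          exact hc
        · rw [hχ0 t (not_le.1 hc), mul_zero, abs_zero]
          linarith
      have key : ∀ φ : 𝓗, φ ∈ H0.Dinf →
          S0.Φ f (S0.Q L (H0.op (S0.Q L (H0.pw k φ))) - H0.op (H0.pw k φ)) =
            S0.Φ (fun t => t ^ k * g t) φ := by
        intro φ hφ
        have hψD : H0.pw k φ ∈ H0.Dinf := dinf_pw hφ k
        have hψd : H0.pw k φ ∈ H0.dom := dinf_mem_dom hψD
        have e1 : S0.Q L (H0.pw k φ) = S0.Φ χ (H0.pw k φ) := rfl
        have e2 : H0.op (S0.Φ χ (H0.pw k φ)) = S0.Φ (fun t => t * χ t) (H0.pw k φ) :=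
          (S0.Φ_dom χ hχm hbχ _).2
        have e3 : S0.Q L (S0.Φ (fun t => t * χ t) (H0.pw k φ)) =
            S0.Φ (fun t => χ t * (t * χ t)) (H0.pw k φ) := by
          show S0.Φ χ _ = _
          rw [S0.Φ_mul χ (fun t => t * χ t) hχm (measurable_id.mul hχm)]; rfl
        rw [e1, e2, e3, map_sub]
        have e4 : S0.Φ f (S0.Φ (fun t => χ t * (t * χ t)) (H0.pw k φ)) =
            S0.Φ (fun t => f t * (χ t * (t * χ t))) (H0.pw k φ) := by
          rw [S0.Φ_mul f (fun t => χ t * (t * χ t)) hfm (hχm.mul (measurable_id.mul hχm))]; rfl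
        have e5 : S0.Φ f (H0.op (H0.pw k φ)) = S0.Φ (fun t => t * f t) (H0.pw k φ) :=
          Phi_comm hsa S0 f hfm hb1 hψd
        rw [e4, e5]
        have e6 : S0.Φ (fun t => f t * (χ t * (t * χ t))) (H0.pw k φ) -
            S0.Φ (fun t => t * f t) (H0.pw k φ) = S0.Φ g (H0.pw k φ) := by
          rw [show S0.Φ g = S0.Φ (fun t => f t * (χ t * (t * χ t))) - S0.Φ (fun t => t * f t)
            from Phi_sub S0 _ _ (hfm.mul (hχm.mul (measurable_id.mul hχm)))
              (measurable_id.mul hfm)]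
          rfl
        rw [e6]
        exact Phi_pw hsa S0 hφ k g hgm (inner_bound hf g hgb)
      have hfinal : ∀ t : ℝ, 1 ≤ t → |t ^ k * g t| ≤ M / L := by
        refine final_bound hf k M hM L hL _ ?_ ?_
        · intro t h1 h2
          show t ^ k * (f t * (χ t * (t * χ t)) - t * f t) = 0
          rw [hχ1 t h1 h2]; ring
        · intro t ht
          have h0 : (0 : ℝ) ≤ t := le_trans zero_le_one ht
          rw [abs_mul, abs_of_nonneg (pow_nonneg h0 k)]
          calc t ^ k * |g t| ≤ t ^ k * (t * f t) :=
                mul_le_mul_of_nonneg_left (hgb t ht) (pow_nonneg h0 k)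
            _ = t ^ (k + 1) * f t := by ring
      have hML : 0 ≤ M / L := le_of_lt (div_pos hM0 (lt_of_lt_of_le one_pos hL))
      refine Real.iSup_le (fun i => ?_) hML
      obtain ⟨φ, hφD, hφn⟩ := i
      calc ‖S0.Φ f (S0.Q L (H0.op (S0.Q L (H0.pw k φ))) - H0.op (H0.pw k φ))‖ =
            ‖S0.Φ (fun t => t ^ k * g t) φ‖ := by rw [key φ (hD ▸ hφD)]
        _ ≤ (M / L) * ‖φ‖ := S0.Φ_norm _ (M / L) hfinal φ
        _ ≤ (M / L) * 1 := mul_le_mul_of_nonneg_left hφn hML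
        _ = M / L := mul_one _

end Paper
end

section
/- Let H0 be a self-adjoint operator in a Hilbert space H, let B be a symmetric operator with D(H0) ⊆ D(B) such that H = H0 + B is self-adjoint on D(H0), and assume D^∞(H0) = D^∞(H) =: D. Then the graph topologies t_{H0} and t_H on D are equivalent; that is, the topology defined by the seminorms φ ↦ ‖H0^n φ‖ (n = 0,1,2,…) coincides with the topology defined by the seminorms φ ↦ ‖H^n φ‖ (n = 0,1,2,…). -/
open scoped ComplexInnerProductSpace

namespace Paper

variable {𝓗 : Type*} [NormedAddCommGroup 𝓗] [InnerProductSpace ℂ 𝓗]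

section Aux

variable {𝓗 : Type*} [NormedAddCommGroup 𝓗] [InnerProductSpace ℂ 𝓗]

namespace Op

theorem pw_apply (T : Op 𝓗) (n : ℕ) (x : 𝓗) : T.pw n x = (T.op ^ n) x :=
  (Module.End.pow_apply _ _ _).symm

theorem pw_zero_apply (T : Op 𝓗) (x : 𝓗) : T.pw 0 x = x := rfl

theorem pw_succ_apply (T : Op 𝓗) (n : ℕ) (x : 𝓗) : T.pw (n + 1) x = T.pw n (T.op x) :=
  Function.iterate_succ_apply _ _ _

theorem pw_succ_apply' (T : Op 𝓗) (n : ℕ) (x : 𝓗) : T.pw (n + 1) x = T.op (T.pw n x) :=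
  Function.iterate_succ_apply' _ _ _

theorem dinf_subset_dom (T : Op 𝓗) : T.Dinf ⊆ (T.dom : Set 𝓗) := fun x hx =>
  (Set.mem_iInter.mp hx 1).1

theorem op_mem_dinf (T : Op 𝓗) {x : 𝓗} (hx : x ∈ T.Dinf) : T.op x ∈ T.Dinf :=
  Set.mem_iInter.mpr fun n => (Set.mem_iInter.mp hx (n + 1)).2

theorem pw_mem_dinf (T : Op 𝓗) {x : 𝓗} (hx : x ∈ T.Dinf) (n : ℕ) : T.pw n x ∈ T.Dinf := by
  induction n with
  | zero => exact hx
  | succ n ih => rw [pw_succ_apply']; exact T.op_mem_dinf ih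

theorem zero_mem_domPow (T : Op 𝓗) (n : ℕ) : (0 : 𝓗) ∈ T.domPow n := by
  induction n with
  | zero => trivial
  | succ n ih => exact ⟨T.dom.zero_mem, by rw [map_zero]; exact ih⟩

theorem add_mem_domPow (T : Op 𝓗) {x y : 𝓗} {n : ℕ} (hx : x ∈ T.domPow n)
    (hy : y ∈ T.domPow n) : x + y ∈ T.domPow n := by
  induction n generalizing x y with
  | zero => trivial
  | succ n ih =>
    exact ⟨T.dom.add_mem hx.1 hy.1, by rw [map_add]; exact ih hx.2 hy.2⟩

theorem smul_mem_domPow (T : Op 𝓗) (c : ℂ) {x : 𝓗} {n : ℕ} (hx : x ∈ T.domPow n) :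
    c • x ∈ T.domPow n := by
  induction n generalizing x with
  | zero => trivial
  | succ n ih =>
    exact ⟨T.dom.smul_mem c hx.1, by rw [map_smul]; exact ih hx.2⟩

/-- `D^∞(T)` as a submodule. -/
def dinfSub (T : Op 𝓗) : Submodule ℂ 𝓗 where
  carrier := T.Dinf
  add_mem' hx hy := Set.mem_iInter.mpr fun n =>
    T.add_mem_domPow (Set.mem_iInter.mp hx n) (Set.mem_iInter.mp hy n)
  zero_mem' := Set.mem_iInter.mpr fun n => T.zero_mem_domPow n
  smul_mem' c x hx := Set.mem_iInter.mpr fun n => T.smul_mem_domPow c (Set.mem_iInter.mp hx n)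

/-- Closedness of a self-adjoint operator, in sequential form. -/
theorem isSelfAdjoint_closed {S : Op 𝓗} (hS : S.IsSelfAdjoint) {u : ℕ → 𝓗} {x y : 𝓗}
    (hu : ∀ k, u k ∈ S.dom) (hx : Filter.Tendsto u Filter.atTop (nhds x))
    (hy : Filter.Tendsto (fun k => S.op (u k)) Filter.atTop (nhds y)) :
    x ∈ S.dom ∧ S.op x = y := by
  refine hS.2.2 x y fun w hw => ?_
  have h1 : Filter.Tendsto (fun k => ⟪S.op w, u k⟫) Filter.atTop (nhds ⟪S.op w, x⟫) :=
    Filter.Tendsto.inner tendsto_const_nhds hx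
  have h2 : Filter.Tendsto (fun k => ⟪S.op w, u k⟫) Filter.atTop (nhds ⟪w, y⟫) := by
    have h2' : Filter.Tendsto (fun k => ⟪w, S.op (u k)⟫) Filter.atTop (nhds ⟪w, y⟫) :=
      Filter.Tendsto.inner tendsto_const_nhds hy
    exact h2'.congr fun k => (hS.2.1 w hw (u k) (hu k)).symm
  exact tendsto_nhds_unique h1 h2

/-- Iterated symmetry on an invariant subset of the domain. -/
theorem symm_pw {T : Op 𝓗} (hT : T.Symmetric) {D : Set 𝓗} (hsub : D ⊆ (T.dom : Set 𝓗))
    (hmap : ∀ x ∈ D, T.op x ∈ D) : ∀ (n : ℕ), ∀ x ∈ D, ∀ y ∈ D,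
      ⟪T.pw n x, y⟫ = ⟪x, T.pw n y⟫ := by
  intro n
  induction n with
  | zero => intro x _ y _; rfl
  | succ n ih =>
    intro x hx y hy
    have hpwy : T.pw n y ∈ D := by
      clear ih; induction n with
      | zero => exact hy
      | succ n ih => rw [pw_succ_apply']; exact hmap _ ih
    rw [pw_succ_apply, pw_succ_apply']
    rw [ih (T.op x) (hmap x hx) y hy]
    exact hT x (hsub hx) (T.pw n y) (hsub hpwy)

end Op

end Aux

section Key

open Filter Topology

variable {𝓗 : Type*} [NormedAddCommGroup 𝓗] [InnerProductSpace ℂ 𝓗] [CompleteSpace 𝓗]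

theorem graphTop_le (S T : Op 𝓗) (hS : S.IsSelfAdjoint) (hT : T.Symmetric)
    (D : Set 𝓗) (hD : D = S.Dinf) (hsubT : D ⊆ (T.dom : Set 𝓗))
    (hmapT : ∀ x ∈ D, T.op x ∈ D) :
    S.graphTopOn D ≤ T.graphTopOn D := by
  -- `D` as a submodule
  have hDsubS : D ⊆ (S.dom : Set 𝓗) := hD ▸ S.dinf_subset_dom
  have hmapS : ∀ x ∈ D, S.op x ∈ D := by
    intro x hx; rw [hD] at hx ⊢; exact S.op_mem_dinf hx
  let M : Submodule ℂ 𝓗 := S.dinfSub.copy D hD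
  letI : AddCommGroup D := M.addCommGroup
  letI : Module ℂ D := M.module
  let j : ↥D →ₗ[ℂ] 𝓗 := M.subtype
  let fS : ℕ → (↥D →ₗ[ℂ] 𝓗) := fun n => (S.op ^ n).comp j
  let fT : ℕ → (↥D →ₗ[ℂ] 𝓗) := fun n => (T.op ^ n).comp j
  have hfS : ∀ n, (fun φ : D => S.pw n ↑φ) = ⇑(fS n) := fun n =>
    funext fun φ => S.pw_apply n φ
  have hfT : ∀ n, (fun φ : D => T.pw n ↑φ) = ⇑(fT n) := fun n =>
    funext fun φ => T.pw_apply n φ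
  letI tS : TopologicalSpace D := S.graphTopOn D
  have htS : tS = ⨅ n : ℕ, TopologicalSpace.induced (⇑(fS n)) inferInstance :=
    iInf_congr fun n => by rw [hfS]
  haveI : IsTopologicalAddGroup D := by
    rw [htS]
    exact topologicalAddGroup_iInf fun n => topologicalAddGroup_induced (fS n).toAddMonoidHom
  haveI : ContinuousSMul ℂ D := by
    rw [htS]
    exact continuousSMul_iInf fun n => continuousSMul_induced (fS n)
  have hcont : ∀ n, Continuous (⇑(fS n)) := by
    intro n
    rw [continuous_iff_le_induced, htS]
    exact iInf_le _ n
  -- the seminorm family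
  let Q : SeminormFamily ℂ D ℕ := fun n => (normSeminorm ℂ 𝓗).comp (fS n)
  have hQ : WithSeminorms Q := by
    rw [SeminormFamily.withSeminorms_iff_nhds_eq_iInf]
    rw [show (𝓝 (0 : D)) = @nhds D tS 0 from rfl, htS, _root_.nhds_iInf]
    refine iInf_congr fun n => ?_
    rw [nhds_induced, map_zero]
    have : Filter.comap (⇑(Q n)) (𝓝 (0 : ℝ)) = Filter.comap (⇑(fS n)) (Filter.comap norm (𝓝 0)) := by
      rw [Filter.comap_comap]; rfl
    rw [this, comap_norm_nhds_zero]
  haveI : FirstCountableTopology D := hQ.firstCountableTopology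
  letI uD : UniformSpace D := IsTopologicalAddGroup.rightUniformSpace D
  haveI : IsUniformAddGroup D := isUniformAddGroup_of_addCommGroup
  haveI : (uniformity D).IsCountablyGenerated := IsUniformAddGroup.uniformity_countably_generated
  -- completeness
  haveI : CompleteSpace D := by
    refine UniformSpace.complete_of_cauchySeq_tendsto fun u hu => ?_
    have hUC : ∀ n, UniformContinuous (⇑(fS n)) := fun n =>
      uniformContinuous_addMonoidHom_of_continuous (f := (fS n).toAddMonoidHom) (hcont n)
    have hc : ∀ n : ℕ, ∃ y : 𝓗, Tendsto (fun k => fS n (u k)) atTop (𝓝 y) := fun n =>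
      cauchySeq_tendsto_of_complete ((hUC n).comp_cauchySeq hu)
    choose ψ hψ using hc
    have humem : ∀ n k, fS n (u k) ∈ D := fun n k => by
      have h1 : ((u k : 𝓗)) ∈ S.Dinf := hD ▸ (u k).2
      have h2 := S.pw_mem_dinf h1 n
      rw [S.pw_apply] at h2
      exact hD ▸ h2
    have hstep : ∀ n, ψ n ∈ S.dom ∧ S.op (ψ n) = ψ (n + 1) := by
      intro n
      refine Op.isSelfAdjoint_closed hS (u := fun k => fS n (u k))
        (fun k => hDsubS (humem n k)) (hψ n) ?_
      have he : (fun k => S.op (fS n (u k))) = fun k => fS (n + 1) (u k) := by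
        funext k
        show S.op ((S.op ^ n) (u k : 𝓗)) = (S.op ^ (n + 1)) (u k : 𝓗)
        rw [pow_succ']
        rfl
      rw [he]
      exact hψ (n + 1)
    have hmemPow : ∀ m n, ψ n ∈ S.domPow m := by
      intro m
      induction m with
      | zero => intro n; trivial
      | succ m ih =>
        intro n
        exact ⟨(hstep n).1, by rw [(hstep n).2]; exact ih (n + 1)⟩
    have hx : ψ 0 ∈ D := hD ▸ Set.mem_iInter.mpr fun m => hmemPow m 0
    have hval : ∀ n, fS n (⟨ψ 0, hx⟩ : D) = ψ n := by
      intro n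
      induction n with
      | zero => rfl
      | succ n ih =>
        show (S.op ^ (n + 1)) (ψ 0) = ψ (n + 1)
        rw [pow_succ']
        show S.op ((S.op ^ n) (ψ 0)) = ψ (n + 1)
        have : (S.op ^ n) (ψ 0) = ψ n := ih
        rw [this]
        exact (hstep n).2
    refine ⟨⟨ψ 0, hx⟩, ?_⟩
    show Tendsto u atTop (@nhds D tS ⟨ψ 0, hx⟩)
    rw [htS, _root_.nhds_iInf, tendsto_iInf]
    intro n
    rw [nhds_induced, tendsto_comap_iff]
    have : (⇑(fS n)) ∘ u = fun k => fS n (u k) := rfl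
    rw [this, hval n]
    exact hψ n
  haveI : ContinuousConstSMul ℂ D := ContinuousSMul.continuousConstSMul
  haveI : BarrelledSpace ℂ D := inferInstance
  -- continuity of the powers of `T`
  suffices hCont : ∀ n, Continuous fun φ : D => T.pw n ↑φ by
    refine le_iInf fun n => ?_
    exact continuous_iff_le_induced.mp (hCont n)
  intro n
  have hpwTD : ∀ x ∈ D, (T.op ^ n) x ∈ D := by
    intro x hx
    have h1 : T.pw n x ∈ D := by
      clear hfT
      induction n with
      | zero => exact hx
      | succ n ih => rw [T.pw_succ_apply']; exact hmapT _ ih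
    rwa [T.pw_apply] at h1
  have hsymm : ∀ x ∈ D, ∀ y ∈ D, ⟪(T.op ^ n) x, y⟫ = ⟪x, (T.op ^ n) y⟫ := by
    intro x hx y hy
    have := Op.symm_pw hT hsubT hmapT n x hx y hy
    rwa [T.pw_apply, T.pw_apply] at this
  let Idx := {ψ : 𝓗 // ψ ∈ D ∧ ‖ψ‖ ≤ 1}
  haveI : Nonempty Idx := ⟨⟨0, M.zero_mem, by simp⟩⟩
  let g : Idx → Seminorm ℂ D := fun ψ =>
    (normSeminorm ℂ ℂ).comp ((innerSL ℂ ((T.op ^ n) ψ.1)).toLinearMap.comp j)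
  have hg_apply : ∀ (ψ : Idx) (φ : D), g ψ φ = ‖⟪(T.op ^ n) ψ.1, (φ : 𝓗)⟫‖ := fun ψ φ => rfl
  have hbound : ∀ (ψ : Idx) (φ : D), g ψ φ ≤ ‖(T.op ^ n) (φ : 𝓗)‖ := by
    intro ψ φ
    rw [hg_apply, hsymm ψ.1 ψ.2.1 φ φ.2]
    calc ‖⟪ψ.1, (T.op ^ n) (φ : 𝓗)⟫‖ ≤ ‖ψ.1‖ * ‖(T.op ^ n) (φ : 𝓗)‖ := norm_inner_le_norm _ _
    _ ≤ 1 * ‖(T.op ^ n) (φ : 𝓗)‖ := by gcongr; exact ψ.2.2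
    _ = ‖(T.op ^ n) (φ : 𝓗)‖ := one_mul _
  have hbddpt : ∀ φ : D, BddAbove (Set.range fun ψ : Idx => g ψ φ) := fun φ =>
    ⟨‖(T.op ^ n) (φ : 𝓗)‖, Set.forall_mem_range.mpr fun ψ => hbound ψ φ⟩
  have bdd : BddAbove (Set.range g) := Seminorm.bddAbove_range_iff.mpr hbddpt
  have hj : Continuous (fun φ : D => (φ : 𝓗)) := by
    have h0 : ⇑(fS 0) = fun φ : D => (φ : 𝓗) := by
      funext φ; show (S.op ^ 0) (φ : 𝓗) = (φ : 𝓗); rw [pow_zero]; rfl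
    rw [← h0]; exact hcont 0
  have hg_cont : ∀ ψ : Idx, Continuous (g ψ) := by
    intro ψ
    have : ⇑(g ψ) = fun φ : D => ‖(innerSL ℂ ((T.op ^ n) ψ.1)) (φ : 𝓗)‖ := rfl
    rw [this]
    exact continuous_norm.comp ((innerSL ℂ _).continuous.comp hj)
  have hsup_cont : Continuous (⨆ ψ : Idx, ⇑(g ψ)) := Seminorm.continuous_iSup g hg_cont bdd
  have hsup_eq : (⨆ ψ : Idx, ⇑(g ψ)) = fun φ : D => ‖(T.op ^ n) (φ : 𝓗)‖ := by
    funext φ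
    rw [iSup_apply]
    refine le_antisymm (ciSup_le fun ψ => hbound ψ φ) ?_
    set x : 𝓗 := (T.op ^ n) (φ : 𝓗) with hxdef
    by_cases hx0 : x = 0
    · rw [hx0, norm_zero]
      refine le_ciSup_of_le (hbddpt φ) (Classical.arbitrary Idx) (apply_nonneg _ _)
    · have hxD : x ∈ D := hpwTD _ φ.2
      set c : ℂ := ((‖x‖⁻¹ : ℝ) : ℂ) with hcdef
      have hcx : c • x ∈ D := M.smul_mem c hxD
      have hnormcx : ‖c • x‖ ≤ 1 := by
        rw [norm_smul, hcdef, Complex.norm_real, norm_inv, norm_norm]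
        rw [inv_mul_cancel₀ (norm_ne_zero_iff.mpr hx0)]
      have hgval : g ⟨c • x, hcx, hnormcx⟩ φ = ‖x‖ := by
        rw [hg_apply]
        show ‖⟪(T.op ^ n) (c • x), (φ : 𝓗)⟫‖ = ‖x‖
        rw [hsymm _ hcx _ φ.2, ← hxdef, inner_smul_left, hcdef]
        rw [Complex.conj_ofReal, norm_mul, Complex.norm_real, norm_inv, norm_norm]
        rw [@inner_self_eq_norm_sq_to_K ℂ]
        rw [norm_pow, RCLike.norm_ofReal, abs_norm, sq]
        rw [← mul_assoc, inv_mul_cancel₀ (norm_ne_zero_iff.mpr hx0), one_mul]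
      calc ‖x‖ = g ⟨c • x, hcx, hnormcx⟩ φ := hgval.symm
      _ ≤ ⨆ ψ : Idx, g ψ φ := le_ciSup (hbddpt φ) _
  have hq_cont : Continuous fun φ : D => ‖(T.op ^ n) (φ : 𝓗)‖ := by
    rw [← hsup_eq]; exact hsup_cont
  -- from continuity of the seminorm to continuity of the map
  rw [hfT n, continuous_iff_continuousAt]
  intro φ₀
  rw [ContinuousAt, tendsto_iff_norm_sub_tendsto_zero]
  have hc2 : Continuous fun φ : D => ‖(T.op ^ n) ((φ - φ₀ : D) : 𝓗)‖ :=
    hq_cont.comp (continuous_id.sub continuous_const)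
  have heq : (fun φ : D => ‖fT n φ - fT n φ₀‖) =
      fun φ : D => ‖(T.op ^ n) ((φ - φ₀ : D) : 𝓗)‖ := by
    funext φ
    rw [show (T.op ^ n) ((φ - φ₀ : D) : 𝓗) = fT n (φ - φ₀) from rfl, map_sub]
  rw [heq]
  have := hc2.tendsto φ₀
  simpa [show ((0 : D) : 𝓗) = 0 from rfl] using this

end Key

variable {𝓗 : Type*} [NormedAddCommGroup 𝓗] [InnerProductSpace ℂ 𝓗] [CompleteSpace 𝓗]

/-- If `H0` is self-adjoint, `B` is symmetric with `D(H0) ⊆ D(B)`,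
`H = H0 + B` is self-adjoint on `D(H0)`, and `D^∞(H0) = D^∞(H) =: D`, then the graph
topologies `t_{H0}` and `t_H` on `D` coincide. -/
theorem stmt2 (H0 B : Op 𝓗) (hsa0 : H0.IsSelfAdjoint)
    (hBsymm : B.Symmetric) (hdomB : (H0.dom : Set 𝓗) ⊆ B.dom)
    (hsaH : (H0.pert B).IsSelfAdjoint)
    (D : Set 𝓗) (hD0 : D = H0.Dinf) (hDH : D = (H0.pert B).Dinf) :
    H0.graphTopOn D = (H0.pert B).graphTopOn D := by
  subst hD0
  refine le_antisymm ?_ ?_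
  · refine graphTop_le H0 (H0.pert B) hsa0 hsaH.2.1 _ rfl ?_ ?_
    · exact H0.dinf_subset_dom
    · intro x hx
      rw [hDH] at hx ⊢
      exact (H0.pert B).op_mem_dinf hx
  · refine graphTop_le (H0.pert B) H0 hsaH hsa0.2.1 _ hDH ?_ ?_
    · exact H0.dinf_subset_dom
    · intro x hx
      exact H0.op_mem_dinf hx

end Paper
end

section
/- Let H0 be a self-adjoint operator with H0 ≥ 1 and spectral projections Q^0_L = E([1,L]), let B be a symmetric operator with D(H0) ⊆ D(B) such that H = H0 + B is self-adjoint on D(H0), and assume D = D^∞(H0) = D^∞(H). Then for every X ∈ L†(D), the cut-offed operators Q^0_L X Q^0_L converge to X in the quasi-uniform topology τ_*^D as L → ∞; in particular, for every f ∈ F and k ∈ ℕ, ‖f(H0)(X − Q^0_L X Q^0_L) H0^k‖ → 0 and ‖H0^k (X − Q^0_L X Q^0_L) f(H0)‖ → 0. -/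
open scoped ComplexInnerProductSpace

namespace Paper

variable {𝓗 : Type*} [NormedAddCommGroup 𝓗] [InnerProductSpace ℂ 𝓗]

variable {𝓗 : Type*} [NormedAddCommGroup 𝓗] [InnerProductSpace ℂ 𝓗] [CompleteSpace 𝓗]

namespace Aux

/-- Functions on `[1,∞)` decaying faster than any inverse power. -/
def decay (g : ℝ → ℝ) : Prop :=
  Measurable g ∧ ∀ n : ℕ, ∃ M : ℝ, ∀ t : ℝ, 1 ≤ t → |t ^ n * g t| ≤ M

noncomputable def chi (L : ℝ) : ℝ → ℝ := Set.indicator (Set.Icc 1 L) fun _ => 1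

noncomputable def rf : ℝ → ℝ := fun t => (max t 1)⁻¹

lemma chi_meas (L : ℝ) : Measurable (chi L) :=
  measurable_const.indicator measurableSet_Icc

lemma chi_abs_le_one (L t : ℝ) : |chi L t| ≤ 1 := by
  unfold chi
  by_cases h : t ∈ Set.Icc 1 L <;> simp [Set.indicator_apply, h]

lemma chi_eq_one {L t : ℝ} (h1 : 1 ≤ t) (h2 : t ≤ L) : chi L t = 1 := by
  unfold chi; rw [Set.indicator_of_mem (Set.mem_Icc.2 ⟨h1, h2⟩)]

lemma chi_eq_zero {L t : ℝ} (h2 : L < t) : chi L t = 0 := by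
  unfold chi; exact Set.indicator_of_notMem (fun h => absurd h.2 (not_le.2 h2)) _

lemma rf_meas : Measurable rf :=
  ((measurable_id.max measurable_const)).inv

lemma rf_eq {t : ℝ} (h : 1 ≤ t) : rf t = t⁻¹ := by
  unfold rf; rw [max_eq_left h]

lemma rf_abs_le_one {t : ℝ} (h : 1 ≤ t) : |rf t| ≤ 1 := by
  rw [rf_eq h, abs_of_nonneg (inv_nonneg.2 (by linarith))]
  exact inv_le_one_of_one_le₀ h

section OpLemmas

variable {𝓗 : Type*} [NormedAddCommGroup 𝓗] [InnerProductSpace ℂ 𝓗] {H0 : Op 𝓗}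

lemma pw_eq (k : ℕ) (x : 𝓗) : H0.pw k x = (H0.op ^ k) x := by
  rw [Op.pw, Module.End.pow_apply]

lemma pw_zero (x : 𝓗) : H0.pw 0 x = x := rfl

lemma pw_succ (k : ℕ) (x : 𝓗) : H0.pw (k + 1) x = H0.pw k (H0.op x) :=
  Function.iterate_succ_apply _ _ _

lemma pw_succ' (k : ℕ) (x : 𝓗) : H0.pw (k + 1) x = H0.op (H0.pw k x) :=
  Function.iterate_succ_apply' _ _ _

lemma domPow_sub {n : ℕ} {x y : 𝓗} (hx : x ∈ H0.domPow n) (hy : y ∈ H0.domPow n) :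
    x - y ∈ H0.domPow n := by
  induction n generalizing x y with
  | zero => trivial
  | succ n ih => exact ⟨sub_mem hx.1 hy.1, by rw [map_sub]; exact ih hx.2 hy.2⟩

lemma domPow_smul {n : ℕ} {x : 𝓗} (c : ℂ) (hx : x ∈ H0.domPow n) :
    c • x ∈ H0.domPow n := by
  induction n generalizing x with
  | zero => trivial
  | succ n ih => exact ⟨Submodule.smul_mem _ c hx.1, by rw [map_smul]; exact ih hx.2⟩

lemma Dinf_sub {x y : 𝓗} (hx : x ∈ H0.Dinf) (hy : y ∈ H0.Dinf) : x - y ∈ H0.Dinf :=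
  Set.mem_iInter.2 fun n => domPow_sub (Set.mem_iInter.1 hx n) (Set.mem_iInter.1 hy n)

lemma Dinf_smul {x : 𝓗} (c : ℂ) (hx : x ∈ H0.Dinf) : c • x ∈ H0.Dinf :=
  Set.mem_iInter.2 fun n => domPow_smul c (Set.mem_iInter.1 hx n)

lemma Dinf_mem_dom {x : 𝓗} (hx : x ∈ H0.Dinf) : x ∈ H0.dom :=
  (Set.mem_iInter.1 hx 1).1

lemma Dinf_op {x : 𝓗} (hx : x ∈ H0.Dinf) : H0.op x ∈ H0.Dinf :=
  Set.mem_iInter.2 fun n => (Set.mem_iInter.1 hx (n + 1)).2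

lemma Dinf_pw {x : 𝓗} (hx : x ∈ H0.Dinf) (m : ℕ) : H0.pw m x ∈ H0.Dinf := by
  induction m with
  | zero => exact hx
  | succ m ih => rw [pw_succ']; exact Dinf_op ih

lemma pw_symm (hsymm : H0.Symmetric) {a b : 𝓗} (ha : a ∈ H0.Dinf) (hb : b ∈ H0.Dinf)
    (n : ℕ) : ⟪H0.pw n a, b⟫ = ⟪a, H0.pw n b⟫ := by
  induction n generalizing a with
  | zero => rfl
  | succ n ih =>
    rw [pw_succ, ih (Dinf_op ha), pw_succ']
    exact hsymm a (Dinf_mem_dom ha) _ (Dinf_mem_dom (Dinf_pw hb n))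

end OpLemmas

section PhiLemmas

variable {𝓗 : Type*} [NormedAddCommGroup 𝓗] [InnerProductSpace ℂ 𝓗] {H0 : Op 𝓗}
variable (S0 : FnCalc H0 1)

lemma Phi_ext {g₁ g₂ : ℝ → ℝ} (h : ∀ t, g₁ t = g₂ t) (x : 𝓗) :
    S0.Φ g₁ x = S0.Φ g₂ x := by
  rw [show g₁ = g₂ from funext h]

lemma Phi_congr {g₁ g₂ : ℝ → ℝ} (h₁ : Measurable g₁) (h₂ : Measurable g₂)
    (h : ∀ t : ℝ, 1 ≤ t → g₁ t = g₂ t) : S0.Φ g₁ = S0.Φ g₂ := by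
  have hd : Measurable fun t => g₁ t - g₂ t := h₁.sub h₂
  have hz : S0.Φ (fun t => g₁ t - g₂ t) = 0 :=
    S0.Φ_supp _ hd fun t ht => by rw [h t ht, sub_self]
  have he : g₁ = fun t => g₂ t + (g₁ t - g₂ t) := by funext t; ring
  rw [he, S0.Φ_add g₂ (fun t => g₁ t - g₂ t) h₂ hd, hz, add_zero]

lemma Phi_sub_split {g h : ℝ → ℝ} (hg : Measurable g) (hh : Measurable h) (x : 𝓗) :
    S0.Φ g x - S0.Φ h x = S0.Φ (fun t => g t - h t) x := by
  have hd : Measurable fun t => g t - h t := hg.sub hh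
  have he : S0.Φ g = S0.Φ fun t => h t + (g t - h t) := by
    apply congrArg; funext t; ring
  rw [he, S0.Φ_add h (fun t => g t - h t) hh hd]
  simp

lemma decay_t {g : ℝ → ℝ} (hg : decay g) : decay fun t => t * g t := by
  refine ⟨measurable_id.mul hg.1, fun n => ?_⟩
  obtain ⟨M, hM⟩ := hg.2 (n + 1)
  exact ⟨M, fun t ht => by
    rw [show t ^ n * (t * g t) = t ^ (n + 1) * g t by ring]; exact hM t ht⟩

lemma decay_bddmul {g h : ℝ → ℝ} (hh : Measurable h) (hb : ∀ t, 1 ≤ t → |h t| ≤ 1)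
    (hg : decay g) : decay fun t => h t * g t := by
  refine ⟨hh.mul hg.1, fun n => ?_⟩
  obtain ⟨M, hM⟩ := hg.2 n
  refine ⟨M, fun t ht => ?_⟩
  rw [show t ^ n * (h t * g t) = h t * (t ^ n * g t) by ring, abs_mul]
  calc |h t| * |t ^ n * g t| ≤ 1 * |t ^ n * g t| :=
        mul_le_mul_of_nonneg_right (hb t ht) (abs_nonneg _)
  _ = |t ^ n * g t| := one_mul _
  _ ≤ M := hM t ht

lemma decay_chi (L : ℝ) : decay (chi L) := by
  refine ⟨chi_meas L, fun n => ⟨max L 1 ^ n, fun t ht => ?_⟩⟩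
  rcases le_or_gt t L with h | h
  · rw [chi_eq_one ht h, mul_one, abs_of_nonneg (pow_nonneg (by linarith) n)]
    exact pow_le_pow_left₀ (by linarith) (le_max_of_le_left h) n
  · rw [chi_eq_zero h, mul_zero, abs_zero]
    positivity

lemma decay_isInF {f : ℝ → ℝ} (hf : IsInF f) : decay f := by
  refine ⟨hf.1.measurable, fun n => ?_⟩
  obtain ⟨M, hM⟩ := hf.2.2 n
  refine ⟨M, fun t ht => ?_⟩
  have h0 : (0:ℝ) ≤ t := by linarith
  rw [abs_of_nonneg (mul_nonneg (pow_nonneg h0 n) (hf.2.1 t h0).le)]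
  exact hM t h0

lemma decay_sqrt_isInF {f : ℝ → ℝ} (hf : IsInF f) : decay fun t => Real.sqrt (f t) := by
  refine ⟨Real.continuous_sqrt.measurable.comp hf.1.measurable, fun n => ?_⟩
  obtain ⟨M, hM⟩ := hf.2.2 (2 * n)
  refine ⟨Real.sqrt M, fun t ht => ?_⟩
  have h0 : (0:ℝ) ≤ t := by linarith
  have h1 : (0:ℝ) ≤ t ^ n := pow_nonneg h0 n
  rw [abs_of_nonneg (mul_nonneg h1 (Real.sqrt_nonneg _))]
  have e : t ^ n * Real.sqrt (f t) = Real.sqrt (t ^ (2 * n) * f t) := by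
    rw [Real.sqrt_mul (by positivity),
      show t ^ (2 * n) = (t ^ n) ^ 2 by rw [← pow_mul, mul_comm], Real.sqrt_sq h1]
  rw [e]
  exact Real.sqrt_le_sqrt (hM t h0)

lemma decay_pw {g : ℝ → ℝ} (hg : decay g) (n : ℕ) (x : 𝓗) :
    S0.Φ g x ∈ H0.domPow n ∧ H0.pw n (S0.Φ g x) = S0.Φ (fun t => t ^ n * g t) x := by
  induction n generalizing g with
  | zero =>
    exact ⟨trivial, by rw [pw_zero]; exact (Phi_ext S0 (fun t => by rw [pow_zero, one_mul]) x).symm⟩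
  | succ n ih =>
    have hb : ∃ M, ∀ t : ℝ, 1 ≤ t → |t * g t| ≤ M := by
      obtain ⟨M, hM⟩ := hg.2 1
      exact ⟨M, fun t ht => by simpa [pow_one] using hM t ht⟩
    have hdom := S0.Φ_dom g hg.1 hb x
    obtain ⟨hmem, hpw⟩ := ih (decay_t hg)
    refine ⟨⟨hdom.1, by rw [hdom.2]; exact hmem⟩, ?_⟩
    rw [pw_succ, hdom.2, hpw]
    exact Phi_ext S0 (fun t => by ring) x

lemma decay_Dinf {g : ℝ → ℝ} (hg : decay g) (x : 𝓗) : S0.Φ g x ∈ H0.Dinf :=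
  Set.mem_iInter.2 fun n => (decay_pw S0 hg n x).1

lemma comm1 (hsymm : H0.Symmetric) {g : ℝ → ℝ} (hg : Measurable g)
    (hb : ∃ M, ∀ t : ℝ, 1 ≤ t → |t * g t| ≤ M) {φ : 𝓗} (hφ : φ ∈ H0.dom) :
    S0.Φ g (H0.op φ) = S0.Φ (fun t => t * g t) φ := by
  apply ext_inner_right ℂ
  intro y
  have hdom := S0.Φ_dom g hg hb y
  calc ⟪S0.Φ g (H0.op φ), y⟫ = ⟪H0.op φ, S0.Φ g y⟫ := S0.Φ_symm g _ y
  _ = ⟪φ, H0.op (S0.Φ g y)⟫ := hsymm φ hφ _ hdom.1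
  _ = ⟪φ, S0.Φ (fun t => t * g t) y⟫ := by rw [hdom.2]
  _ = ⟪S0.Φ (fun t => t * g t) φ, y⟫ := (S0.Φ_symm _ φ y).symm

lemma commPow (hsymm : H0.Symmetric) {g : ℝ → ℝ} (hg : Measurable g) {n : ℕ}
    (hb : ∀ j : ℕ, j ≤ n → ∃ M, ∀ t : ℝ, 1 ≤ t → |t ^ j * g t| ≤ M)
    {φ : 𝓗} (hφ : φ ∈ H0.domPow n) :
    S0.Φ g (H0.pw n φ) = S0.Φ (fun t => t ^ n * g t) φ := by
  induction n generalizing φ with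
  | zero => rw [pw_zero]; exact Phi_ext S0 (fun t => by rw [pow_zero, one_mul]) φ
  | succ n ih =>
    have h1 : S0.Φ g (H0.pw n (H0.op φ)) = S0.Φ (fun t => t ^ n * g t) (H0.op φ) :=
      ih (fun j hj => hb j (hj.trans (Nat.le_succ n))) hφ.2
    have h2 : S0.Φ (fun t => t ^ n * g t) (H0.op φ)
        = S0.Φ (fun t => t * (t ^ n * g t)) φ := by
      refine comm1 S0 hsymm ?_ ?_ hφ.1
      · exact (measurable_id.pow_const n).mul hg
      · obtain ⟨M, hM⟩ := hb (n + 1) le_rfl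
        exact ⟨M, fun t ht => by
          rw [show t * (t ^ n * g t) = t ^ (n + 1) * g t by ring]; exact hM t ht⟩
    rw [pw_succ, h1, h2]
    exact Phi_ext S0 (fun t => by ring) φ

lemma SR (x : 𝓗) : S0.Φ rf x ∈ H0.dom ∧ H0.op (S0.Φ rf x) = x := by
  have hb : ∀ t : ℝ, 1 ≤ t → |t * rf t| ≤ 1 := fun t ht => by
    rw [rf_eq ht, mul_inv_cancel₀ (by linarith : t ≠ 0), abs_one]
  have h := S0.Φ_dom rf rf_meas ⟨1, hb⟩ x
  refine ⟨h.1, ?_⟩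
  rw [h.2]
  have : S0.Φ (fun t => t * rf t) = S0.Φ fun _ => 1 :=
    Phi_congr S0 (measurable_id.mul rf_meas) measurable_const fun t ht => by
      rw [rf_eq ht, mul_inv_cancel₀ (by linarith : t ≠ 0)]
  rw [this, S0.Φ_one]
  rfl

lemma R_Dinf {x : 𝓗} (hx : x ∈ H0.Dinf) : S0.Φ rf x ∈ H0.Dinf := by
  refine Set.mem_iInter.2 fun n => ?_
  cases n with
  | zero => trivial
  | succ n => exact ⟨(SR S0 x).1, by rw [(SR S0 x).2]; exact Set.mem_iInter.1 hx n⟩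

lemma chi_t_bound (L : ℝ) : ∃ M, ∀ t : ℝ, 1 ≤ t → |t * chi L t| ≤ M := by
  obtain ⟨M, hM⟩ := (decay_chi L).2 1
  exact ⟨M, fun t ht => by simpa [pow_one] using hM t ht⟩

lemma Qcomm (hsymm : H0.Symmetric) (L : ℝ) {φ : 𝓗} (hφ : φ ∈ H0.dom) :
    H0.op (S0.Φ (chi L) φ) = S0.Φ (chi L) (H0.op φ) := by
  rw [(S0.Φ_dom (chi L) (chi_meas L) (chi_t_bound L) φ).2,
    comm1 S0 hsymm (chi_meas L) (chi_t_bound L) hφ]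

lemma QpwComm (hsymm : H0.Symmetric) (L : ℝ) {φ : 𝓗} (hφ : φ ∈ H0.Dinf) (m : ℕ) :
    H0.pw m (S0.Φ (chi L) φ) = S0.Φ (chi L) (H0.pw m φ) := by
  induction m with
  | zero => rfl
  | succ m ih =>
    rw [pw_succ', ih, Qcomm S0 hsymm L (Dinf_mem_dom (Dinf_pw hφ m)), pw_succ']

end PhiLemmas

section Crux

variable {𝓗 : Type*} [NormedAddCommGroup 𝓗] [InnerProductSpace ℂ 𝓗] [CompleteSpace 𝓗]
variable {H0 : Op 𝓗} (S0 : FnCalc H0 1)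

lemma crux1 (hsymm : H0.Symmetric) (X Xd : 𝓗 →ₗ[ℂ] 𝓗)
    (hXD : ∀ x ∈ H0.Dinf, X x ∈ H0.Dinf) (hXdD : ∀ x ∈ H0.Dinf, Xd x ∈ H0.Dinf)
    (hpair : ∀ x ∈ H0.Dinf, ∀ y ∈ H0.Dinf, ⟪X x, y⟫ = ⟪x, Xd y⟫)
    {g : ℝ → ℝ} (hg : decay g) (m : ℕ) :
    ∃ C : ℝ, 0 ≤ C ∧ ∀ u ∈ H0.Dinf, ‖S0.Φ g (X (H0.pw m u))‖ ≤ C * ‖u‖ := by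
  set T : 𝓗 → 𝓗 := fun u => S0.Φ g (X (H0.pw m u)) with hT
  have key : ∀ u ∈ H0.Dinf, ∀ y : 𝓗, ⟪T u, y⟫ = ⟪u, H0.pw m (Xd (S0.Φ g y))⟫ := by
    intro u hu y
    have hgy : S0.Φ g y ∈ H0.Dinf := decay_Dinf S0 hg y
    calc ⟪T u, y⟫ = ⟪X (H0.pw m u), S0.Φ g y⟫ := S0.Φ_symm g _ y
    _ = ⟪H0.pw m u, Xd (S0.Φ g y)⟫ := hpair _ (Dinf_pw hu m) _ hgy
    _ = ⟪u, H0.pw m (Xd (S0.Φ g y))⟫ := pw_symm hsymm hu (hXdD _ hgy) m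
  have hbs : ∀ y : 𝓗, ∃ C, ∀ i : {u : 𝓗 // u ∈ H0.Dinf ∧ ‖u‖ ≤ 1},
      ‖(innerSL ℂ (T ↑i)) y‖ ≤ C := by
    intro y
    refine ⟨‖H0.pw m (Xd (S0.Φ g y))‖, fun i => ?_⟩
    have h1 : ‖(innerSL ℂ (T ↑i)) y‖ = ‖⟪T ↑i, y⟫‖ := rfl
    rw [h1, key ↑i i.2.1 y]
    calc ‖⟪(i : 𝓗), H0.pw m (Xd (S0.Φ g y))⟫‖
        ≤ ‖(i : 𝓗)‖ * ‖H0.pw m (Xd (S0.Φ g y))‖ := norm_inner_le_norm _ _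
    _ ≤ 1 * ‖H0.pw m (Xd (S0.Φ g y))‖ :=
        mul_le_mul_of_nonneg_right i.2.2 (norm_nonneg _)
    _ = _ := one_mul _
  obtain ⟨C', hC'⟩ := banach_steinhaus hbs
  have hTu : ∀ u ∈ H0.Dinf, ‖u‖ ≤ 1 → ‖T u‖ ≤ C' := by
    intro u hu hu1
    have := hC' ⟨u, hu, hu1⟩
    rwa [innerSL_apply_norm] at this
  have hsm : ∀ (a : ℂ) (v : 𝓗), T (a • v) = a • T v := by
    intro a v
    simp only [hT, pw_eq, map_smul]
  refine ⟨max C' 0, le_max_right _ _, fun u hu => ?_⟩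
  rcases eq_or_ne u 0 with rfl | hne
  · simp [hT, pw_eq]
  · have hcu : ‖u‖ ≠ 0 := norm_ne_zero_iff.2 hne
    have hcpos : (0:ℝ) < ‖u‖ := norm_pos_iff.2 hne
    set u' : 𝓗 := ((‖u‖ : ℂ))⁻¹ • u with hu'
    have hu'D : u' ∈ H0.Dinf := Dinf_smul _ hu
    have hnorm : ‖u'‖ = 1 := by
      rw [hu', norm_smul, norm_inv, Complex.norm_real, Real.norm_eq_abs,
        abs_of_nonneg (norm_nonneg u), inv_mul_cancel₀ hcu]
    have hrec : T u = (‖u‖ : ℂ) • T u' := by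
      rw [hu', hsm, smul_smul, mul_inv_cancel₀ (by exact_mod_cast hcu), one_smul]
    calc ‖T u‖ = ‖(‖u‖ : ℂ)‖ * ‖T u'‖ := by rw [hrec, norm_smul]
    _ = ‖u‖ * ‖T u'‖ := by rw [Complex.norm_real, Real.norm_eq_abs, abs_of_nonneg (norm_nonneg u)]
    _ ≤ ‖u‖ * C' := mul_le_mul_of_nonneg_left (hTu u' hu'D hnorm.le) (norm_nonneg u)
    _ ≤ ‖u‖ * max C' 0 := mul_le_mul_of_nonneg_left (le_max_left _ _) (norm_nonneg u)
    _ = max C' 0 * ‖u‖ := mul_comm _ _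

lemma crux2 (hsymm : H0.Symmetric) (X Xd : 𝓗 →ₗ[ℂ] 𝓗)
    (hXD : ∀ x ∈ H0.Dinf, X x ∈ H0.Dinf) (hXdD : ∀ x ∈ H0.Dinf, Xd x ∈ H0.Dinf)
    (hpair : ∀ x ∈ H0.Dinf, ∀ y ∈ H0.Dinf, ⟪X x, y⟫ = ⟪x, Xd y⟫)
    {g : ℝ → ℝ} (hg : decay g) (m : ℕ) :
    ∃ C : ℝ, 0 ≤ C ∧ ∀ u : 𝓗, ‖H0.pw m (X (S0.Φ g u))‖ ≤ C * ‖u‖ := by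
  have hpair' : ∀ x ∈ H0.Dinf, ∀ y ∈ H0.Dinf, ⟪Xd x, y⟫ = ⟪x, X y⟫ := by
    intro x hx y hy
    have h := congrArg (starRingEnd ℂ) (hpair y hy x hx)
    rw [inner_conj_symm, inner_conj_symm] at h
    exact h.symm
  obtain ⟨C, hC0, hC⟩ := crux1 S0 hsymm Xd X hXdD hXD hpair' hg m
  refine ⟨C, hC0, fun u => ?_⟩
  set v : 𝓗 := H0.pw m (X (S0.Φ g u)) with hv
  have hgu : S0.Φ g u ∈ H0.Dinf := decay_Dinf S0 hg u
  have hXu : X (S0.Φ g u) ∈ H0.Dinf := hXD _ hgu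
  have hvD : v ∈ H0.Dinf := Dinf_pw hXu m
  have h1 : ⟪v, v⟫ = ⟪u, S0.Φ g (Xd (H0.pw m v))⟫ := by
    calc ⟪v, v⟫ = ⟪X (S0.Φ g u), H0.pw m v⟫ := pw_symm hsymm hXu hvD m
    _ = ⟪S0.Φ g u, Xd (H0.pw m v)⟫ := hpair _ hgu _ (Dinf_pw hvD m)
    _ = ⟪u, S0.Φ g (Xd (H0.pw m v))⟫ := S0.Φ_symm g u (Xd (H0.pw m v))
  have h2 : ‖v‖ * ‖v‖ ≤ ‖u‖ * (C * ‖v‖) := by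
    calc ‖v‖ * ‖v‖ = RCLike.re ⟪v, v⟫ := (inner_self_eq_norm_mul_norm v).symm
    _ ≤ ‖⟪v, v⟫‖ := (RCLike.abs_re_le_norm _).trans' (le_abs_self _)
    _ = ‖⟪u, S0.Φ g (Xd (H0.pw m v))⟫‖ := by rw [h1]
    _ ≤ ‖u‖ * ‖S0.Φ g (Xd (H0.pw m v))‖ := norm_inner_le_norm _ _
    _ ≤ ‖u‖ * (C * ‖v‖) :=
        mul_le_mul_of_nonneg_left (hC _ hvD) (norm_nonneg u)
  rcases eq_or_lt_of_le (norm_nonneg v) with h0 | h0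
  · rw [← h0]; positivity
  · have : ‖v‖ * ‖v‖ ≤ (C * ‖u‖) * ‖v‖ := by
      calc ‖v‖ * ‖v‖ ≤ ‖u‖ * (C * ‖v‖) := h2
      _ = (C * ‖u‖) * ‖v‖ := by ring
    exact le_of_mul_le_mul_right this h0

end Crux

section Main

variable {𝓗 : Type*} [NormedAddCommGroup 𝓗] [InnerProductSpace ℂ 𝓗] [CompleteSpace 𝓗]
variable {H0 : Op 𝓗} (S0 : FnCalc H0 1)

lemma Q_eq_chi (L : ℝ) : S0.Q L = S0.Φ (chi L) := rfl

noncomputable def Rit (S0 : FnCalc H0 1) (n : ℕ) (v : 𝓗) : 𝓗 :=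
  (fun z => S0.Φ rf z)^[n] v

lemma Rit_zero (v : 𝓗) : Rit S0 0 v = v := rfl

lemma Rit_succ (n : ℕ) (v : 𝓗) : Rit S0 (n + 1) v = S0.Φ rf (Rit S0 n v) :=
  Function.iterate_succ_apply' _ _ _

lemma Rit_Dinf {v : 𝓗} (hv : v ∈ H0.Dinf) (n : ℕ) : Rit S0 n v ∈ H0.Dinf := by
  induction n with
  | zero => exact hv
  | succ n ih => rw [Rit_succ]; exact R_Dinf S0 ih

lemma pw_Rit (n : ℕ) (v : 𝓗) : H0.pw n (Rit S0 n v) = v := by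
  induction n with
  | zero => rfl
  | succ n ih =>
    rw [pw_succ, Rit_succ, (SR S0 (Rit S0 n v)).2, ih]

lemma Rit_eq_Phi (n : ℕ) (v : 𝓗) : Rit S0 n v = S0.Φ (fun t => rf t ^ n) v := by
  induction n with
  | zero =>
    rw [Rit_zero]
    have : S0.Φ (fun t => rf t ^ 0) v = S0.Φ (fun _ => 1) v :=
      Phi_ext S0 (fun t => pow_zero _) v
    rw [this, S0.Φ_one]; rfl
  | succ n ih =>
    rw [Rit_succ, ih]
    have hmul := S0.Φ_mul rf (fun t => rf t ^ n) rf_meas (rf_meas.pow_const n)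
    calc S0.Φ rf (S0.Φ (fun t => rf t ^ n) v)
        = S0.Φ (fun t => rf t * rf t ^ n) v := by rw [hmul]; rfl
    _ = S0.Φ (fun t => rf t ^ (n + 1)) v := Phi_ext S0 (fun t => (pow_succ' _ _).symm) v

lemma sqrt_tail_bound {f : ℝ → ℝ} (hf : IsInF f) {M₁ : ℝ}
    (hM₁ : ∀ x : ℝ, 0 ≤ x → x ^ 1 * f x ≤ M₁) {L : ℝ} (hL : 1 ≤ L) :
    ∀ t : ℝ, 1 ≤ t → |(1 - chi L t) * Real.sqrt (f t)| ≤ Real.sqrt (M₁ * L⁻¹) := by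
  intro t ht
  rcases le_or_gt t L with h | h
  · rw [chi_eq_one ht h]
    simpa using Real.sqrt_nonneg (M₁ * L⁻¹)
  · rw [chi_eq_zero h, sub_zero, one_mul, abs_of_nonneg (Real.sqrt_nonneg _)]
    apply Real.sqrt_le_sqrt
    have hL0 : (0:ℝ) < L := by linarith
    have h1 : L * f t ≤ t * f t :=
      mul_le_mul_of_nonneg_right h.le (hf.2.1 t (by linarith)).le
    have h2 : t * f t ≤ M₁ := by simpa using hM₁ t (by linarith)
    calc f t = (L * f t) * L⁻¹ := by field_simp
    _ ≤ M₁ * L⁻¹ := mul_le_mul_of_nonneg_right (h1.trans h2) (inv_nonneg.2 hL0.le)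

lemma rf_pow_bound (k : ℕ) (L : ℝ) :
    ∀ j : ℕ, j ≤ k → ∀ t : ℝ, 1 ≤ t → |t ^ j * ((1 - chi L t) * rf t ^ (k + 1))| ≤ 1 := by
  intro j hj t ht
  rcases le_or_gt t L with h | h
  · rw [chi_eq_one ht h]; simp
  · rw [chi_eq_zero h, sub_zero, one_mul, rf_eq ht, inv_pow]
    have ht0 : (0:ℝ) < t := by linarith
    have hle : t ^ j ≤ t ^ (k + 1) := pow_le_pow_right₀ ht (hj.trans (Nat.le_succ k))
    rw [abs_of_nonneg (by positivity)]
    rw [← div_eq_mul_inv]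
    exact div_le_one_of_le₀ hle (by positivity)

lemma rf_tail_bound (k : ℕ) {L : ℝ} (hL : 1 ≤ L) :
    ∀ t : ℝ, 1 ≤ t → |t ^ k * ((1 - chi L t) * rf t ^ (k + 1))| ≤ L⁻¹ := by
  intro t ht
  have hL0 : (0:ℝ) < L := by linarith
  rcases le_or_gt t L with h | h
  · rw [chi_eq_one ht h]; simpa using (inv_nonneg.2 hL0.le)
  · rw [chi_eq_zero h, sub_zero, one_mul, rf_eq ht, inv_pow]
    have ht0 : (0:ℝ) < t := by linarith
    have e : t ^ k * (t ^ (k + 1))⁻¹ = t⁻¹ := by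
      rw [pow_succ, mul_inv, ← mul_assoc, mul_inv_cancel₀ (pow_ne_zero k ht0.ne'), one_mul]
    rw [e, abs_of_nonneg (inv_nonneg.2 ht0.le)]
    have := one_div_le_one_div_of_le hL0 h.le
    simpa [one_div] using this

lemma rf_tail_bound1 {L : ℝ} (hL : 1 ≤ L) :
    ∀ t : ℝ, 1 ≤ t → |(1 - chi L t) * rf t| ≤ L⁻¹ := by
  intro t ht
  have hL0 : (0:ℝ) < L := by linarith
  rcases le_or_gt t L with h | h
  · rw [chi_eq_one ht h]; simpa using (inv_nonneg.2 hL0.le)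
  · rw [chi_eq_zero h, sub_zero, one_mul, rf_eq ht,
      abs_of_nonneg (inv_nonneg.2 (by linarith : (0:ℝ) ≤ t))]
    have := one_div_le_one_div_of_le hL0 h.le
    simpa [one_div] using this

lemma rf_t_bound (L : ℝ) :
    ∀ t : ℝ, 1 ≤ t → |t * ((1 - chi L t) * rf t)| ≤ 1 := by
  intro t ht
  rcases le_or_gt t L with h | h
  · rw [chi_eq_one ht h]; simp
  · rw [chi_eq_zero h, sub_zero, one_mul, rf_eq ht,
      mul_inv_cancel₀ (by linarith : t ≠ 0), abs_one]

lemma goal1_bound (hsymm : H0.Symmetric) (X Xd : 𝓗 →ₗ[ℂ] 𝓗)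
    (hXD : ∀ x ∈ H0.Dinf, X x ∈ H0.Dinf) (hXdD : ∀ x ∈ H0.Dinf, Xd x ∈ H0.Dinf)
    (hpair : ∀ x ∈ H0.Dinf, ∀ y ∈ H0.Dinf, ⟪X x, y⟫ = ⟪x, Xd y⟫)
    {f : ℝ → ℝ} (hf : IsInF f) (k : ℕ) :
    ∃ C₁ C₂ M₁ : ℝ, 0 ≤ C₁ ∧ 0 ≤ C₂ ∧ 0 ≤ M₁ ∧
      ∀ L : ℝ, 1 ≤ L → ∀ φ ∈ H0.Dinf, ‖φ‖ ≤ 1 →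
        ‖S0.Φ f (X (H0.pw k φ) - S0.Φ (chi L) (X (S0.Φ (chi L) (H0.pw k φ))))‖
          ≤ C₁ * Real.sqrt (M₁ * L⁻¹) + C₂ * L⁻¹ := by
  obtain ⟨M₁, hM₁⟩ := hf.2.2 1
  have hM₁0 : 0 ≤ M₁ := by
    have h1 := hM₁ 1 zero_le_one
    have h2 := (hf.2.1 1 zero_le_one).le
    simp only [one_pow, one_mul] at h1
    linarith
  obtain ⟨C₁, hC₁0, hC₁⟩ := crux1 S0 hsymm X Xd hXD hXdD hpair (decay_sqrt_isInF hf) k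
  obtain ⟨C₂, hC₂0, hC₂⟩ := crux1 S0 hsymm X Xd hXD hXdD hpair (decay_isInF hf) (k + 1)
  refine ⟨C₁, C₂, M₁, hC₁0, hC₂0, hM₁0, ?_⟩
  intro L hL φ hφ hφ1
  have hL0 : (0:ℝ) < L := by linarith
  have mχ := chi_meas L
  have mf : Measurable f := hf.1.measurable
  have mf2 : Measurable fun t => Real.sqrt (f t) :=
    Real.continuous_sqrt.measurable.comp mf
  have m1χ : Measurable fun t => 1 - chi L t := measurable_const.sub mχ
  set ψ := H0.pw k φ with hψdef
  have hψ : ψ ∈ H0.Dinf := Dinf_pw hφ k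
  set w := ψ - S0.Φ (chi L) ψ with hwdef
  have hQψ : S0.Φ (chi L) ψ = ψ - w := by rw [hwdef]; abel
  have hXQψ : X (S0.Φ (chi L) ψ) = X ψ - X w := by rw [hQψ, map_sub]
  have split : S0.Φ f (X ψ - S0.Φ (chi L) (X (S0.Φ (chi L) ψ)))
      = S0.Φ (fun t => (1 - chi L t) * f t) (X ψ)
        + S0.Φ (fun t => f t * chi L t) (X w) := by
    calc S0.Φ f (X ψ - S0.Φ (chi L) (X (S0.Φ (chi L) ψ)))
        = S0.Φ f (X ψ) - S0.Φ f (S0.Φ (chi L) (X (S0.Φ (chi L) ψ))) := map_sub _ _ _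
    _ = S0.Φ f (X ψ) - S0.Φ (fun t => f t * chi L t) (X (S0.Φ (chi L) ψ)) := by
        rw [S0.Φ_mul f (chi L) mf mχ]; rfl
    _ = S0.Φ f (X ψ) - (S0.Φ (fun t => f t * chi L t) (X ψ)
          - S0.Φ (fun t => f t * chi L t) (X w)) := by rw [hXQψ, map_sub]
    _ = (S0.Φ f (X ψ) - S0.Φ (fun t => f t * chi L t) (X ψ))
          + S0.Φ (fun t => f t * chi L t) (X w) := by abel
    _ = S0.Φ (fun t => (1 - chi L t) * f t) (X ψ)
          + S0.Φ (fun t => f t * chi L t) (X w) := by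
        rw [Phi_sub_split S0 (h := fun t => f t * chi L t) mf (mf.mul mχ)]
        exact congrArg (· + S0.Φ (fun t => f t * chi L t) (X w))
          (Phi_ext S0 (fun t => by ring) (X ψ))
  have hA : ‖S0.Φ (fun t => (1 - chi L t) * f t) (X ψ)‖ ≤ C₁ * Real.sqrt (M₁ * L⁻¹) := by
    have hfac : S0.Φ (fun t => (1 - chi L t) * f t)
        = (S0.Φ (fun t => (1 - chi L t) * Real.sqrt (f t))).comp
            (S0.Φ fun t => Real.sqrt (f t)) := by
      rw [← S0.Φ_mul (fun t => (1 - chi L t) * Real.sqrt (f t)) (fun t => Real.sqrt (f t)) (m1χ.mul mf2) mf2]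
      exact Phi_congr S0 (m1χ.mul mf) ((m1χ.mul mf2).mul mf2) fun t ht => by
        have hs : Real.sqrt (f t) * Real.sqrt (f t) = f t :=
          Real.mul_self_sqrt (hf.2.1 t (by linarith)).le
        calc (1 - chi L t) * f t = (1 - chi L t) * (Real.sqrt (f t) * Real.sqrt (f t)) := by
              rw [hs]
        _ = (1 - chi L t) * Real.sqrt (f t) * Real.sqrt (f t) := by ring
    rw [hfac]
    calc ‖(S0.Φ (fun t => (1 - chi L t) * Real.sqrt (f t)))
            ((S0.Φ fun t => Real.sqrt (f t)) (X ψ))‖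
        ≤ Real.sqrt (M₁ * L⁻¹) * ‖(S0.Φ fun t => Real.sqrt (f t)) (X ψ)‖ :=
          S0.Φ_norm _ _ (sqrt_tail_bound hf hM₁ hL) _
    _ ≤ Real.sqrt (M₁ * L⁻¹) * (C₁ * ‖φ‖) :=
          mul_le_mul_of_nonneg_left (hC₁ φ hφ) (Real.sqrt_nonneg _)
    _ ≤ Real.sqrt (M₁ * L⁻¹) * (C₁ * 1) :=
          mul_le_mul_of_nonneg_left
            (mul_le_mul_of_nonneg_left hφ1 hC₁0) (Real.sqrt_nonneg _)
    _ = C₁ * Real.sqrt (M₁ * L⁻¹) := by ring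
  have hρD : Rit S0 (k + 1) ψ ∈ H0.Dinf := Rit_Dinf S0 hψ (k + 1)
  set w' := Rit S0 (k + 1) ψ - S0.Φ (chi L) (Rit S0 (k + 1) ψ) with hw'def
  have hw'D : w' ∈ H0.Dinf := Dinf_sub hρD (decay_Dinf S0 (decay_chi L) _)
  have hpww' : H0.pw (k + 1) w' = w := by
    have h1 : H0.pw (k + 1) w'
        = H0.pw (k + 1) (Rit S0 (k + 1) ψ)
          - H0.pw (k + 1) (S0.Φ (chi L) (Rit S0 (k + 1) ψ)) := by
      rw [hw'def]; simp only [pw_eq, map_sub]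
    rw [h1, QpwComm S0 hsymm L hρD, pw_Rit, hwdef]
  have hw'norm : ‖w'‖ ≤ L⁻¹ * ‖φ‖ := by
    have e1 : w' = S0.Φ (fun t => (1 - chi L t) * rf t ^ (k + 1)) ψ := by
      have hm : S0.Φ (chi L) (S0.Φ (fun t => rf t ^ (k + 1)) ψ)
          = S0.Φ (fun t => chi L t * rf t ^ (k + 1)) ψ := by
        rw [S0.Φ_mul (chi L) _ mχ (rf_meas.pow_const (k + 1))]; rfl
      rw [hw'def, Rit_eq_Phi, hm,
        Phi_sub_split S0 (h := fun t => chi L t * rf t ^ (k + 1)) (rf_meas.pow_const (k + 1)) (mχ.mul (rf_meas.pow_const (k + 1)))]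
      exact Phi_ext S0 (fun t => by ring) ψ
    have e2 : w' = S0.Φ (fun t => t ^ k * ((1 - chi L t) * rf t ^ (k + 1))) φ := by
      rw [e1, hψdef]
      exact commPow S0 hsymm (m1χ.mul (rf_meas.pow_const (k + 1)))
        (fun j hj => ⟨1, rf_pow_bound k L j hj⟩) (Set.mem_iInter.1 hφ k)
    calc ‖w'‖ = ‖S0.Φ (fun t => t ^ k * ((1 - chi L t) * rf t ^ (k + 1))) φ‖ := by rw [← e2]
    _ ≤ L⁻¹ * ‖φ‖ := S0.Φ_norm _ _ (rf_tail_bound k hL) φ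
  have hB : ‖S0.Φ (fun t => f t * chi L t) (X w)‖ ≤ C₂ * L⁻¹ := by
    have hsplitχ : S0.Φ (fun t => f t * chi L t) (X w)
        = S0.Φ (chi L) (S0.Φ f (X w)) := by
      rw [Phi_ext S0 (fun t => mul_comm (f t) (chi L t)) (X w),
        S0.Φ_mul (chi L) f mχ mf]; rfl
    rw [hsplitχ]
    calc ‖S0.Φ (chi L) (S0.Φ f (X w))‖ ≤ 1 * ‖S0.Φ f (X w)‖ :=
          S0.Φ_norm _ _ (fun t ht => chi_abs_le_one L t) _
    _ = ‖S0.Φ f (X (H0.pw (k + 1) w'))‖ := by rw [one_mul, hpww']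
    _ ≤ C₂ * ‖w'‖ := hC₂ w' hw'D
    _ ≤ C₂ * (L⁻¹ * ‖φ‖) := mul_le_mul_of_nonneg_left hw'norm hC₂0
    _ ≤ C₂ * (L⁻¹ * 1) := by
        have := mul_le_mul_of_nonneg_left hφ1 (inv_nonneg.2 hL0.le)
        exact mul_le_mul_of_nonneg_left this hC₂0
    _ = C₂ * L⁻¹ := by ring
  calc ‖S0.Φ f (X ψ - S0.Φ (chi L) (X (S0.Φ (chi L) ψ)))‖
      = ‖S0.Φ (fun t => (1 - chi L t) * f t) (X ψ)
          + S0.Φ (fun t => f t * chi L t) (X w)‖ := by rw [split]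
  _ ≤ ‖S0.Φ (fun t => (1 - chi L t) * f t) (X ψ)‖
        + ‖S0.Φ (fun t => f t * chi L t) (X w)‖ := norm_add_le _ _
  _ ≤ C₁ * Real.sqrt (M₁ * L⁻¹) + C₂ * L⁻¹ := add_le_add hA hB

lemma goal2_bound (hsymm : H0.Symmetric) (X Xd : 𝓗 →ₗ[ℂ] 𝓗)
    (hXD : ∀ x ∈ H0.Dinf, X x ∈ H0.Dinf) (hXdD : ∀ x ∈ H0.Dinf, Xd x ∈ H0.Dinf)
    (hpair : ∀ x ∈ H0.Dinf, ∀ y ∈ H0.Dinf, ⟪X x, y⟫ = ⟪x, Xd y⟫)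
    {f : ℝ → ℝ} (hf : IsInF f) (k : ℕ) :
    ∃ C₄ C₃ M₁ : ℝ, 0 ≤ C₄ ∧ 0 ≤ C₃ ∧ 0 ≤ M₁ ∧
      ∀ L : ℝ, 1 ≤ L → ∀ φ ∈ H0.Dinf, ‖φ‖ ≤ 1 →
        ‖H0.pw k (X (S0.Φ f φ) - S0.Φ (chi L) (X (S0.Φ (chi L) (S0.Φ f φ))))‖
          ≤ C₄ * Real.sqrt (M₁ * L⁻¹) + C₃ * L⁻¹ := by
  obtain ⟨M₁, hM₁⟩ := hf.2.2 1
  have hM₁0 : 0 ≤ M₁ := by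
    have h1 := hM₁ 1 zero_le_one
    have h2 := (hf.2.1 1 zero_le_one).le
    simp only [one_pow, one_mul] at h1
    linarith
  obtain ⟨C₃, hC₃0, hC₃⟩ := crux2 S0 hsymm X Xd hXD hXdD hpair (decay_isInF hf) (k + 1)
  obtain ⟨C₄, hC₄0, hC₄⟩ := crux2 S0 hsymm X Xd hXD hXdD hpair (decay_sqrt_isInF hf) k
  refine ⟨C₄, C₃, M₁, hC₄0, hC₃0, hM₁0, ?_⟩
  intro L hL φ hφ hφ1
  have hL0 : (0:ℝ) < L := by linarith
  have mχ := chi_meas L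
  have mf : Measurable f := hf.1.measurable
  have mf2 : Measurable fun t => Real.sqrt (f t) :=
    Real.continuous_sqrt.measurable.comp mf
  have m1χ : Measurable fun t => 1 - chi L t := measurable_const.sub mχ
  set η := S0.Φ f φ with hηdef
  have hη : η ∈ H0.Dinf := decay_Dinf S0 (decay_isInF hf) φ
  have hXη : X η ∈ H0.Dinf := hXD _ hη
  set ζ := η - S0.Φ (chi L) η with hζdef
  have hζ : ζ ∈ H0.Dinf := Dinf_sub hη (decay_Dinf S0 (decay_chi L) η)
  have hXζ : X ζ ∈ H0.Dinf := hXD _ hζ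
  have hQη : S0.Φ (chi L) η = η - ζ := by rw [hζdef]; abel
  have split : X η - S0.Φ (chi L) (X (S0.Φ (chi L) η))
      = (X η - S0.Φ (chi L) (X η)) + S0.Φ (chi L) (X ζ) := by
    rw [hQη, map_sub, map_sub]; abel
  have splitpw : H0.pw k (X η - S0.Φ (chi L) (X (S0.Φ (chi L) η)))
      = H0.pw k (X η - S0.Φ (chi L) (X η)) + H0.pw k (S0.Φ (chi L) (X ζ)) := by
    rw [split]; simp only [pw_eq, map_add]
  have hB1 : ‖H0.pw k (X η - S0.Φ (chi L) (X η))‖ ≤ C₃ * L⁻¹ := by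
    have e1 : H0.pw k (X η - S0.Φ (chi L) (X η))
        = H0.pw k (X η) - S0.Φ (chi L) (H0.pw k (X η)) := by
      have : H0.pw k (X η - S0.Φ (chi L) (X η))
          = H0.pw k (X η) - H0.pw k (S0.Φ (chi L) (X η)) := by simp only [pw_eq, map_sub]
      rw [this, QpwComm S0 hsymm L hXη]
    have e2 : H0.pw k (X η) - S0.Φ (chi L) (H0.pw k (X η))
        = S0.Φ (fun t => (1 - chi L t) * rf t) (H0.pw (k + 1) (X η)) := by
      have hu : H0.pw k (X η) ∈ H0.dom := Dinf_mem_dom (Dinf_pw hXη k)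
      have hc := comm1 S0 hsymm (g := fun t => (1 - chi L t) * rf t) (m1χ.mul rf_meas) ⟨1, rf_t_bound L⟩ hu
      have hcongr : S0.Φ (fun t => t * ((1 - chi L t) * rf t))
          = S0.Φ fun t => 1 - chi L t :=
        Phi_congr S0 (measurable_id.mul (m1χ.mul rf_meas)) m1χ fun t ht => by
          rw [rf_eq ht]
          field_simp
      have hone : S0.Φ (fun t => (1:ℝ) - chi L t) (H0.pw k (X η))
          = H0.pw k (X η) - S0.Φ (chi L) (H0.pw k (X η)) := by
        rw [← Phi_sub_split S0 measurable_const mχ, S0.Φ_one]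
        rfl
      rw [pw_succ', hc, hcongr, hone]
    rw [e1, e2]
    calc ‖S0.Φ (fun t => (1 - chi L t) * rf t) (H0.pw (k + 1) (X η))‖
        ≤ L⁻¹ * ‖H0.pw (k + 1) (X η)‖ := S0.Φ_norm _ _ (rf_tail_bound1 hL) _
    _ ≤ L⁻¹ * (C₃ * ‖φ‖) := mul_le_mul_of_nonneg_left (hC₃ φ) (inv_nonneg.2 hL0.le)
    _ ≤ L⁻¹ * (C₃ * 1) :=
        mul_le_mul_of_nonneg_left
          (mul_le_mul_of_nonneg_left hφ1 hC₃0) (inv_nonneg.2 hL0.le)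
    _ = C₃ * L⁻¹ := by ring
  have hB2 : ‖H0.pw k (S0.Φ (chi L) (X ζ))‖ ≤ C₄ * Real.sqrt (M₁ * L⁻¹) := by
    have hζeq : ζ = S0.Φ (fun t => Real.sqrt (f t))
        (S0.Φ (fun t => (1 - chi L t) * Real.sqrt (f t)) φ) := by
      have h1 : ζ = S0.Φ (fun t => (1 - chi L t) * f t) φ := by
        have hm : S0.Φ (chi L) (S0.Φ f φ) = S0.Φ (fun t => chi L t * f t) φ := by
          rw [S0.Φ_mul (chi L) f mχ mf]; rfl
        rw [hζdef, hηdef, hm, Phi_sub_split S0 (h := fun t => chi L t * f t) mf (mχ.mul mf)]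
        exact Phi_ext S0 (fun t => by ring) φ
      have h2 : S0.Φ (fun t => (1 - chi L t) * f t)
          = (S0.Φ (fun t => Real.sqrt (f t))).comp
              (S0.Φ fun t => (1 - chi L t) * Real.sqrt (f t)) := by
        rw [← S0.Φ_mul (fun t => Real.sqrt (f t)) (fun t => (1 - chi L t) * Real.sqrt (f t)) mf2 (m1χ.mul mf2)]
        exact Phi_congr S0 (m1χ.mul mf) (mf2.mul (m1χ.mul mf2)) fun t ht => by
          have hs : Real.sqrt (f t) * Real.sqrt (f t) = f t :=
            Real.mul_self_sqrt (hf.2.1 t (by linarith)).le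
          calc (1 - chi L t) * f t
              = (1 - chi L t) * (Real.sqrt (f t) * Real.sqrt (f t)) := by rw [hs]
          _ = Real.sqrt (f t) * ((1 - chi L t) * Real.sqrt (f t)) := by ring
      rw [h1, h2]; rfl
    have hz : ‖S0.Φ (fun t => (1 - chi L t) * Real.sqrt (f t)) φ‖
        ≤ Real.sqrt (M₁ * L⁻¹) := by
      calc ‖S0.Φ (fun t => (1 - chi L t) * Real.sqrt (f t)) φ‖
          ≤ Real.sqrt (M₁ * L⁻¹) * ‖φ‖ := S0.Φ_norm _ _ (sqrt_tail_bound hf hM₁ hL) φ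
      _ ≤ Real.sqrt (M₁ * L⁻¹) * 1 :=
          mul_le_mul_of_nonneg_left hφ1 (Real.sqrt_nonneg _)
      _ = Real.sqrt (M₁ * L⁻¹) := mul_one _
    calc ‖H0.pw k (S0.Φ (chi L) (X ζ))‖
        = ‖S0.Φ (chi L) (H0.pw k (X ζ))‖ := by rw [QpwComm S0 hsymm L hXζ]
    _ ≤ 1 * ‖H0.pw k (X ζ)‖ := S0.Φ_norm _ _ (fun t ht => chi_abs_le_one L t) _
    _ = ‖H0.pw k (X ζ)‖ := one_mul _
    _ ≤ C₄ * ‖S0.Φ (fun t => (1 - chi L t) * Real.sqrt (f t)) φ‖ := by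
        rw [hζeq]; exact hC₄ _
    _ ≤ C₄ * Real.sqrt (M₁ * L⁻¹) := mul_le_mul_of_nonneg_left hz hC₄0
  calc ‖H0.pw k (X η - S0.Φ (chi L) (X (S0.Φ (chi L) η)))‖
      = ‖H0.pw k (X η - S0.Φ (chi L) (X η)) + H0.pw k (S0.Φ (chi L) (X ζ))‖ := by
        rw [splitpw]
  _ ≤ ‖H0.pw k (X η - S0.Φ (chi L) (X η))‖ + ‖H0.pw k (S0.Φ (chi L) (X ζ))‖ :=
        norm_add_le _ _
  _ ≤ C₃ * L⁻¹ + C₄ * Real.sqrt (M₁ * L⁻¹) := add_le_add hB1 hB2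
  _ = C₄ * Real.sqrt (M₁ * L⁻¹) + C₃ * L⁻¹ := by ring

lemma tendsto_aux {F : ℝ → ℝ} (A B M : ℝ) (hM : 0 ≤ M)
    (h0 : ∀ L : ℝ, 0 ≤ F L)
    (hb : ∀ L : ℝ, 1 ≤ L → F L ≤ A * Real.sqrt (M * L⁻¹) + B * L⁻¹) :
    Filter.Tendsto F Filter.atTop (nhds 0) := by
  have h1 : Filter.Tendsto (fun L : ℝ => M * L⁻¹) Filter.atTop (nhds 0) := by
    simpa using tendsto_inv_atTop_zero.const_mul M
  have h2 : Filter.Tendsto (fun L : ℝ => A * Real.sqrt (M * L⁻¹) + B * L⁻¹)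
      Filter.atTop (nhds 0) := by
    have hs := h1.sqrt
    rw [Real.sqrt_zero] at hs
    simpa using (hs.const_mul A).add (tendsto_inv_atTop_zero.const_mul B)
  refine tendsto_of_tendsto_of_tendsto_of_le_of_le' tendsto_const_nhds h2
    (Filter.Eventually.of_forall h0) ?_
  exact (Filter.eventually_ge_atTop 1).mono hb


lemma opNormOn_nonneg (D : Set 𝓗) (A : 𝓗 → 𝓗) : 0 ≤ opNormOn D A := by
  unfold opNormOn
  exact Real.iSup_nonneg fun i => norm_nonneg _

lemma opNormOn_le {D : Set 𝓗} {A : 𝓗 → 𝓗} {c : ℝ} (hc : 0 ≤ c)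
    (h : ∀ φ ∈ D, ‖φ‖ ≤ 1 → ‖A φ‖ ≤ c) : opNormOn D A ≤ c := by
  unfold opNormOn
  exact Real.iSup_le (fun i => h i i.2.1 i.2.2) hc

end Main
end Aux


/-- (Lemma 2.2) Under the standing assumptions, for every `X ∈ L†(D)`
the cut-offed operators `Q⁰_L X Q⁰_L` converge to `X` in the quasi-uniform topology:
for every `f ∈ F` and `k ∈ ℕ`, `‖f(H0)(X - Q⁰_L X Q⁰_L)H0^k‖ → 0` and
`‖H0^k (X - Q⁰_L X Q⁰_L) f(H0)‖ → 0` as `L → ∞`. -/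
theorem stmt4 (H0 B : Op 𝓗) (hsa0 : H0.IsSelfAdjoint) (hge : H0.GeOne)
    (hBsymm : B.Symmetric) (hdomB : (H0.dom : Set 𝓗) ⊆ B.dom)
    (hsaH : (H0.pert B).IsSelfAdjoint)
    (S0 : FnCalc H0 1)
    (D : Set 𝓗) (hD0 : D = H0.Dinf) (hDH : D = (H0.pert B).Dinf) :
    ∀ X : 𝓗 →ₗ[ℂ] 𝓗, MemLdag D X → ∀ f : ℝ → ℝ, IsInF f → ∀ k : ℕ,
      Filter.Tendsto (fun L : ℝ => opNormOn D (fun φ =>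
          S0.Φ f (X (H0.pw k φ) - S0.Q L (X (S0.Q L (H0.pw k φ))))))
        Filter.atTop (nhds 0) ∧
      Filter.Tendsto (fun L : ℝ => opNormOn D (fun φ =>
          H0.pw k (X (S0.Φ f φ) - S0.Q L (X (S0.Q L (S0.Φ f φ))))))
        Filter.atTop (nhds 0) := by
  intro X hX f hf k
  subst hD0
  obtain ⟨hXD, Xd, hXdD, hpair⟩ := hX
  have hsymm : H0.Symmetric := hsa0.2.1
  constructor
  · obtain ⟨C₁, C₂, M₁, h10, h20, hM0, hbd⟩ :=
      Aux.goal1_bound S0 hsymm X Xd hXD hXdD hpair hf k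
    refine Aux.tendsto_aux C₁ C₂ M₁ hM0 (fun L => Aux.opNormOn_nonneg _ _) ?_
    intro L hL
    refine Aux.opNormOn_le
      (add_nonneg (mul_nonneg h10 (Real.sqrt_nonneg _))
        (mul_nonneg h20 (inv_nonneg.2 (by linarith : (0:ℝ) ≤ L)))) ?_
    intro φ hφ hφ1
    exact hbd L hL φ hφ hφ1
  · obtain ⟨C₄, C₃, M₁, h40, h30, hM0, hbd⟩ :=
      Aux.goal2_bound S0 hsymm X Xd hXD hXdD hpair hf k
    refine Aux.tendsto_aux C₄ C₃ M₁ hM0 (fun L => Aux.opNormOn_nonneg _ _) ?_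
    intro L hL
    refine Aux.opNormOn_le
      (add_nonneg (mul_nonneg h40 (Real.sqrt_nonneg _))
        (mul_nonneg h30 (inv_nonneg.2 (by linarith : (0:ℝ) ≤ L)))) ?_
    intro φ hφ hφ1
    exact hbd L hL φ hφ hφ1


end Paper
end
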